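/- arXiv:1710.03523 — 9 statements merged into one kernel-verified Lean document; each statement's English description precedes it below -/
import Mathlib

section
/- Let 2 ≤ e ≤ m be integers. For every numerical semigroup S with multiplicity m and embedding dimension e, the numerical semigroup φ(S) generated by {m + (x mod m) : x ∈ msg(S)} is a packed numerical semigroup with multiplicity m and embedding dimension e; moreover φ(S) = S whenever S is packed, so φ defines a surjective map from L(m,e) onto C(m,e). -/
open scoped Pointwise

/-- A numerical semigroup: an additive submonoid of ℕ with finite complement. -/
def IsNumericalSemigroup (S : Set ℕ) : Prop :=
  0 ∈ S ∧ (∀ a ∈ S, ∀ b ∈ S, a + b ∈ S) ∧ Sᶜ.Finite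

/-- Multiplicity: the least positive element. -/
noncomputable def mult (S : Set ℕ) : ℕ := sInf (S \ {0})

/-- Minimal system of generators: (S∖{0}) ∖ ((S∖{0})+(S∖{0})). -/
def msg (S : Set ℕ) : Set ℕ := (S \ {0}) \ ((S \ {0}) + (S \ {0}))

/-- Embedding dimension: cardinality of the minimal system of generators. -/
noncomputable def edim (S : Set ℕ) : ℕ := (msg S).ncard

/-- The submonoid of (ℕ,+) generated by a set, as a set. -/
def genSet (B : Set ℕ) : Set ℕ := (AddSubmonoid.closure B : Set ℕ)

/-- Packed numerical semigroup: msg(S) ⊆ {m(S),…,2m(S)−1}. -/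
def IsPacked (S : Set ℕ) : Prop := msg S ⊆ Set.Icc (mult S) (2 * mult S - 1)

/-- L(m,e): numerical semigroups with multiplicity m and embedding dimension e. -/
def Lset (m e : ℕ) : Set (Set ℕ) :=
  {S | IsNumericalSemigroup S ∧ mult S = m ∧ edim S = e}

/-- C(m,e): packed numerical semigroups in L(m,e). -/
def Cset (m e : ℕ) : Set (Set ℕ) := {S ∈ Lset m e | IsPacked S}

/-- φ(S): the monoid generated by {m + (x mod m) : x ∈ msg(S)}, m = mult S. -/
noncomputable def phi (S : Set ℕ) : Set ℕ :=
  genSet ((fun x => mult S + x % mult S) '' msg S)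

/-- The class [S] = {T ∈ L(m,e) : φ(T) = φ(S)}. -/
def classOf (m e : ℕ) (S : Set ℕ) : Set (Set ℕ) := {T ∈ Lset m e | phi T = phi S}

/-- Frobenius number: the largest element of the complement. -/
noncomputable def Frob (S : Set ℕ) : ℕ := sSup Sᶜ

/-- Genus: the cardinality of the complement. -/
noncomputable def genus (S : Set ℕ) : ℕ := Sᶜ.ncard

/-- The Apéry set of n in S. -/
def Ap (S : Set ℕ) (n : ℕ) : Set ℕ := {s ∈ S | ¬ ∃ t ∈ S, s = t + n}

/-- Minimal elements of a set in a partial order. -/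
def minimalsOf {β : Type*} [PartialOrder β] (X : Set β) : Set β :=
  {x ∈ X | ∀ y ∈ X, y ≤ x → y = x}

/- ===================== auxiliary lemmas ===================== -/

lemma ns_mul_mem {S : Set ℕ} (hS : IsNumericalSemigroup S) {x : ℕ} (hx : x ∈ S) (k : ℕ) :
    k * x ∈ S := by
  induction k with
  | zero => simpa using hS.1
  | succ n ih =>
    have := hS.2.1 _ ih _ hx
    simpa [Nat.succ_mul] using this

lemma ns_nonempty {S : Set ℕ} (hS : IsNumericalSemigroup S) : (S \ {0}).Nonempty := by
  have h1 : Sᶜᶜ.Infinite := hS.2.2.infinite_compl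
  rw [compl_compl] at h1
  exact (h1.diff (Set.finite_singleton 0)).nonempty

lemma mult_mem {S : Set ℕ} (hS : IsNumericalSemigroup S) : mult S ∈ S \ {0} :=
  Nat.sInf_mem (ns_nonempty hS)

lemma mult_le {S : Set ℕ} {s : ℕ} (hs : s ∈ S) (h0 : s ≠ 0) : mult S ≤ s :=
  Nat.sInf_le ⟨hs, h0⟩

lemma mult_mem_msg {S : Set ℕ} (hS : IsNumericalSemigroup S) : mult S ∈ msg S := by
  refine ⟨mult_mem hS, ?_⟩
  intro h
  rw [Set.mem_add] at h
  obtain ⟨a, ha, b, hb, hab⟩ := h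
  have h1 : mult S ≤ a := mult_le ha.1 (by simpa using ha.2)
  have h2 : mult S ≤ b := mult_le hb.1 (by simpa using hb.2)
  have h3 : mult S ≠ 0 := by simpa using (mult_mem hS).2
  omega

lemma gen_msg {S : Set ℕ} (hS : IsNumericalSemigroup S) : S = genSet (msg S) := by
  apply Set.Subset.antisymm
  · intro s
    induction s using Nat.strong_induction_on with
    | _ s ih =>
      intro hs
      rcases eq_or_ne s 0 with rfl | h0
      · exact AddSubmonoid.zero_mem _
      by_cases hm : s ∈ msg S
      · exact AddSubmonoid.subset_closure hm
      have hsum : s ∈ (S \ {0}) + (S \ {0}) := by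
        by_contra hc
        exact hm ⟨⟨hs, h0⟩, hc⟩
      rw [Set.mem_add] at hsum
      obtain ⟨a, ha, b, hb, rfl⟩ := hsum
      have ha0 : a ≠ 0 := by simpa using ha.2
      have hb0 : b ≠ 0 := by simpa using hb.2
      exact AddSubmonoid.add_mem _ (ih a (by omega) ha.1) (ih b (by omega) hb.1)
  · intro s hs
    exact AddSubmonoid.closure_induction (fun x hx => hx.1.1) hS.1
      (fun x y _ _ hx hy => hS.2.1 _ hx _ hy) hs

lemma msg_injOn {S : Set ℕ} (hS : IsNumericalSemigroup S) {m : ℕ} (hm : mult S = m)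
    (hm1 : 1 ≤ m) : Set.InjOn (fun x => m + x % m) (msg S) := by
  have hmS : m ∈ S := hm ▸ (mult_mem hS).1
  have key : ∀ x ∈ msg S, ∀ y ∈ msg S, x ≤ y → x % m = y % m → x = y := by
    intro x hx y hy hxy hmod
    rcases eq_or_lt_of_le hxy with rfl | hlt
    · rfl
    exfalso
    obtain ⟨k, hk⟩ := (Nat.modEq_iff_dvd' (le_of_lt hlt)).1 hmod
    have hk0 : k ≠ 0 := by
      rintro rfl
      simp at hk
      omega
    have hkm : m * k ∈ S := by
      have := ns_mul_mem hS hmS k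
      simpa [Nat.mul_comm] using this
    apply hy.2
    rw [Set.mem_add]
    have hx0 : x ≠ 0 := by simpa using hx.1.2
    refine ⟨x, ⟨hx.1.1, by simpa using hx0⟩, m * k, ⟨hkm, ?_⟩, by omega⟩
    simp only [Set.mem_singleton_iff]
    exact Nat.mul_ne_zero (by omega) hk0
  intro x hx y hy h
  simp only at h
  have h' : x % m = y % m := by omega
  rcases le_total x y with hxy | hyx
  · exact key x hx y hy hxy h'
  · exact (key y hy x hx hyx h'.symm).symm

lemma phi_packed {S : Set ℕ} (hS : IsNumericalSemigroup S) {m : ℕ} (hm : mult S = m)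
    (hm1 : 1 ≤ m) (hp : IsPacked S) : phi S = S := by
  have himg : (fun x => m + x % m) '' msg S = msg S := by
    have hcong : ∀ x ∈ msg S, m + x % m = x := by
      intro x hx
      have hx1 := hp hx
      rw [Set.mem_Icc, hm] at hx1
      obtain ⟨h1, h2⟩ := hx1
      have h3 : x % m = x - m := by
        rw [Nat.mod_eq_sub_mod h1, Nat.mod_eq_of_lt (by omega)]
      omega
    calc (fun x => m + x % m) '' msg S = id '' msg S := Set.image_congr hcong
      _ = msg S := Set.image_id _
  unfold phi
  rw [hm, himg, ← gen_msg hS]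

lemma phi_main {S : Set ℕ} (hS : IsNumericalSemigroup S) {m : ℕ} (hm : mult S = m)
    (hm2 : 2 ≤ m) :
    IsNumericalSemigroup (phi S) ∧ mult (phi S) = m ∧
      msg (phi S) = (fun x => m + x % m) '' msg S := by
  set B : Set ℕ := (fun x => m + x % m) '' msg S with hB
  have hphi : phi S = (AddSubmonoid.closure B : Set ℕ) := by
    unfold phi genSet
    rw [hm]
  have hmmsg : mult S ∈ msg S := mult_mem_msg hS
  have hmmsg' : m ∈ msg S := hm ▸ hmmsg
  have hBlb : ∀ b ∈ B, m ≤ b := by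
    rintro b ⟨x, hx, rfl⟩
    exact Nat.le_add_right _ _
  have hBub : ∀ b ∈ B, b ≤ 2 * m - 1 := by
    rintro b ⟨x, hx, rfl⟩
    show m + x % m ≤ 2 * m - 1
    have := Nat.mod_lt x (show 0 < m by omega)
    omega
  have hmB : m ∈ B := ⟨m, hmmsg', by simp⟩
  have hTlb : ∀ t ∈ AddSubmonoid.closure B, t = 0 ∨ m ≤ t := by
    intro t ht
    refine AddSubmonoid.closure_induction (fun x hx => Or.inr (hBlb x hx)) (Or.inl rfl)
      ?_ ht
    intro x y _ _ hx hy
    omega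
  -- multiplicity
  have hmultT : mult (phi S) = m := by
    apply le_antisymm
    · apply Nat.sInf_le
      refine ⟨?_, by simp only [Set.mem_singleton_iff]; omega⟩
      rw [hphi]
      exact AddSubmonoid.subset_closure hmB
    · refine le_csInf ⟨m, ?_, by simp only [Set.mem_singleton_iff]; omega⟩ ?_
      · rw [hphi]; exact AddSubmonoid.subset_closure hmB
      · rintro b ⟨hb, hb0⟩
        rw [hphi] at hb
        rcases hTlb b hb with rfl | h
        · simp at hb0
        · exact h
  -- msg
  have hmsgT : msg (phi S) = B := by
    apply Set.Subset.antisymm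
    · rintro t ⟨⟨htT, ht0⟩, hnot⟩
      rw [hphi] at htT
      obtain ⟨l, hl, rfl⟩ := AddSubmonoid.exists_list_of_mem_closure htT
      match l, hl, ht0, hnot with
      | [], _, ht0, _ => simp at ht0
      | [b], hl, _, _ => simpa using hl b (by simp)
      | b :: c :: r, hl, _, hnot =>
        exfalso
        apply hnot
        rw [Set.mem_add]
        have hbB : b ∈ B := hl b (by simp)
        have hcB : c ∈ B := hl c (by simp)
        refine ⟨b, ⟨?_, ?_⟩, (c :: r).sum, ⟨?_, ?_⟩, by simp⟩
        · rw [hphi]; exact AddSubmonoid.subset_closure hbB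
        · have := hBlb b hbB
          simp only [Set.mem_singleton_iff]
          omega
        · rw [hphi]
          exact AddSubmonoid.list_sum_mem _
            (fun x hx => AddSubmonoid.subset_closure (hl x (List.mem_cons_of_mem _ hx)))
        · have h1 := hBlb c hcB
          simp only [List.sum_cons, Set.mem_singleton_iff]
          omega
    · rintro b hbB
      refine ⟨⟨?_, ?_⟩, ?_⟩
      · rw [hphi]; exact AddSubmonoid.subset_closure hbB
      · have := hBlb b hbB
        simp only [Set.mem_singleton_iff]
        omega
      · intro h
        rw [Set.mem_add] at h
        obtain ⟨u, hu, v, hv, huv⟩ := h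
        have hu' : u = 0 ∨ m ≤ u := hTlb u (by have := hu.1; rw [hphi] at this; exact this)
        have hv' : v = 0 ∨ m ≤ v := hTlb v (by have := hv.1; rw [hphi] at this; exact this)
        have hu0 : u ≠ 0 := by simpa using hu.2
        have hv0 : v ≠ 0 := by simpa using hv.2
        have := hBub b hbB
        omega
  -- cofiniteness
  haveI : NeZero m := ⟨by omega⟩
  set g : ℕ →+ ZMod m := Nat.castAddMonoidHom (ZMod m) with hg
  have hgapp : ∀ n : ℕ, g n = (n : ZMod m) := fun n => rfl
  have hgB : g '' B = g '' msg S := by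
    rw [hB, ← Set.image_comp]
    apply Set.image_congr
    intro x _
    show ((m + x % m : ℕ) : ZMod m) = (x : ZMod m)
    push_cast
    rw [ZMod.natCast_mod, ZMod.natCast_self]
    ring
  set M' : AddSubmonoid (ZMod m) := AddSubmonoid.closure (g '' B) with hM'
  have hSsub : ∀ s ∈ S, (s : ZMod m) ∈ M' := by
    intro s hs
    rw [hM', hgB, ← AddMonoidHom.map_mclosure]
    refine AddSubmonoid.mem_map.2 ⟨s, ?_, rfl⟩
    have := (gen_msg hS) ▸ hs
    exact this
  have hneg : ∀ x ∈ M', -x ∈ M' := by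
    intro x hx
    have hzero : (m - 1) • x + x = 0 := by
      have h1 : (m - 1) • x + x = m • x := by
        rw [← succ_nsmul]
        congr 1
        omega
      rw [h1, nsmul_eq_mul, ZMod.natCast_self, zero_mul]
    have h2 : (m - 1) • x = -x := eq_neg_of_add_eq_zero_left hzero
    rw [← h2]
    exact nsmul_mem hx _
  have hNbig : ∃ N : ℕ, ∀ k, N ≤ k → k ∈ S := by
    obtain ⟨N, hN⟩ := hS.2.2.bddAbove
    refine ⟨N + 1, fun k hk => ?_⟩
    by_contra h
    have : k ≤ N := hN h
    omega
  have h1M : (1 : ZMod m) ∈ M' := by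
    obtain ⟨N, hN⟩ := hNbig
    have ha := hSsub N (hN N le_rfl)
    have hb := hSsub (N + 1) (hN _ (by omega))
    have heq : (1 : ZMod m) = ((N + 1 : ℕ) : ZMod m) + -(N : ZMod m) := by
      push_cast
      ring
    rw [heq]
    exact AddSubmonoid.add_mem _ hb (hneg _ ha)
  have hallM : ∀ c : ZMod m, c ∈ M' := by
    intro c
    have heq : c = c.val • (1 : ZMod m) := by
      rw [nsmul_eq_mul, mul_one, ZMod.natCast_val, ZMod.cast_id]
    rw [heq]
    exact nsmul_mem h1M _
  have hrep : ∀ c : ZMod m, ∃ t, t ∈ AddSubmonoid.closure B ∧ (t : ZMod m) = c := by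
    intro c
    have h1 := hallM c
    rw [hM', ← AddMonoidHom.map_mclosure] at h1
    obtain ⟨t, ht, hgt⟩ := AddSubmonoid.mem_map.1 h1
    exact ⟨t, ht, hgt⟩
  choose F hF1 hF2 using hrep
  have hcof : (phi S)ᶜ.Finite := by
    apply Set.Finite.subset (Set.finite_Iio (Finset.univ.sup F))
    intro n hn
    by_contra h
    simp only [Set.mem_Iio, not_lt] at h
    apply hn
    set c := (n : ZMod m) with hc
    have htn : F c ≤ n := le_trans (Finset.le_sup (Finset.mem_univ c)) h
    have hmod : F c ≡ n [MOD m] := (ZMod.natCast_eq_natCast_iff _ _ _).1 (by rw [hF2 c])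
    obtain ⟨k, hk⟩ := (Nat.modEq_iff_dvd' htn).1 hmod
    have hn' : n = F c + m * k := by omega
    rw [hphi, hn']
    have hkm : m * k ∈ AddSubmonoid.closure B := by
      have := nsmul_mem (AddSubmonoid.subset_closure hmB) k
      simpa [smul_eq_mul, Nat.mul_comm] using this
    exact AddSubmonoid.add_mem _ (hF1 c) hkm
  refine ⟨⟨?_, ?_, hcof⟩, hmultT, hmsgT⟩
  · rw [hphi]
    exact AddSubmonoid.zero_mem _
  · intro a ha b hb
    rw [hphi] at ha hb ⊢
    exact AddSubmonoid.add_mem _ ha hb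

/-- φ maps L(m,e) into C(m,e), fixes packed semigroups,
and is surjective onto C(m,e). -/
theorem stmt0 (m e : ℕ) (h2 : 2 ≤ e) (hem : e ≤ m) :
    (∀ S ∈ Lset m e, phi S ∈ Cset m e) ∧
    (∀ S ∈ Lset m e, IsPacked S → phi S = S) ∧
    (∀ T ∈ Cset m e, ∃ S ∈ Lset m e, phi S = T) := by
  have hm2 : 2 ≤ m := le_trans h2 hem
  refine ⟨?_, ?_, ?_⟩
  · rintro S ⟨hns, hmS, heS⟩
    obtain ⟨h1, h2', h3⟩ := phi_main hns hmS hm2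
    have hinj := msg_injOn hns hmS (by omega)
    have hedim : edim (phi S) = e := by
      rw [edim, h3, Set.ncard_image_of_injOn hinj, ← edim, heS]
    refine ⟨⟨h1, h2', hedim⟩, ?_⟩
    intro b hb
    rw [h3] at hb
    obtain ⟨x, hx, rfl⟩ := hb
    simp only [Set.mem_Icc, h2']
    have := Nat.mod_lt x (show 0 < m by omega)
    omega
  · rintro S ⟨hns, hmS, _⟩ hp
    exact phi_packed hns hmS (by omega) hp
  · rintro T ⟨⟨hns, hmT, heT⟩, hp⟩
    exact ⟨T, ⟨hns, hmT, heT⟩, phi_packed hns hmT (by omega) hp⟩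
end

section
/- Let 2 ≤ e ≤ m be integers and let A be a subset of {1, …, m−1} of cardinality e−1 such that gcd(A ∪ {m}) = 1. Then the additive submonoid S of ℕ generated by {m} + (A ∪ {0}) = {m + a : a ∈ A ∪ {0}} is a packed numerical semigroup with multiplicity m and embedding dimension e, and msg(S) = {m + a : a ∈ A ∪ {0}}. -/
open scoped Pointwise

lemma exists_bezout_nat (b g : ℕ) (hb : 0 < b) : ∃ p q : ℕ, b * p = g * q + Nat.gcd b g := by
  rcases Nat.eq_zero_or_pos g with hg | hg
  · subst hg; exact ⟨1, 0, by simp⟩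
  · obtain ⟨α, β, hbez⟩ : ∃ α β : ℤ, (Nat.gcd b g : ℤ) = ↑b * α + ↑g * β :=
      ⟨_, _, Nat.gcd_eq_gcd_ab b g⟩
    set N : ℕ := α.natAbs + β.natAbs + 1 with hN
    refine ⟨(α + g * N).toNat, (b * N - β).toNat, ?_⟩
    have hNval : (N:ℤ) = |α| + |β| + 1 := by
      rw [hN]; push_cast; ring
    have hp : (0:ℤ) ≤ α + g * N := by
      have h1 : (N:ℤ) ≤ g * N := le_mul_of_one_le_left (by positivity) (by exact_mod_cast hg)
      nlinarith [neg_abs_le α, abs_nonneg β]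
    have hq : (0:ℤ) ≤ b * N - β := by
      have h1 : (N:ℤ) ≤ b * N := le_mul_of_one_le_left (by positivity) (by exact_mod_cast hb)
      nlinarith [le_abs_self β, abs_nonneg α]
    have key : (b:ℤ) * (α + g * N) = g * (b * N - β) + Nat.gcd b g := by
      rw [hbez]; ring
    have := key
    rw [← Int.toNat_of_nonneg hp, ← Int.toNat_of_nonneg hq] at this
    exact_mod_cast this

lemma bezout_closure (B : Finset ℕ) :
    ∃ x y : ℕ, x ∈ AddSubmonoid.closure (B : Set ℕ) ∧ y ∈ AddSubmonoid.closure (B : Set ℕ) ∧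
      x = y + B.gcd id := by
  classical
  induction B using Finset.induction with
  | empty => exact ⟨0, 0, zero_mem _, zero_mem _, by simp⟩
  | insert b B hb ih =>
    obtain ⟨x, y, hx, hy, hxy⟩ := ih
    have hmono : AddSubmonoid.closure (B : Set ℕ) ≤ AddSubmonoid.closure (↑(insert b B) : Set ℕ) :=
      AddSubmonoid.closure_mono (by simp [Finset.coe_insert, Set.subset_insert])
    have hbmem : b ∈ AddSubmonoid.closure (↑(insert b B) : Set ℕ) :=
      AddSubmonoid.subset_closure (by simp)
    have hx' := hmono hx
    have hy' := hmono hy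
    set g := B.gcd id with hg
    have hgins : (insert b B).gcd id = Nat.gcd b g := by
      rw [Finset.gcd_insert]; rfl
    rcases Nat.eq_zero_or_pos b with hb0 | hb0
    · subst hb0
      refine ⟨x, y, hx', hy', ?_⟩
      rw [hgins, Nat.gcd_zero_left]; exact hxy
    · obtain ⟨p, q, hpq⟩ := exists_bezout_nat b g hb0
      refine ⟨p • b + q • y, q • x, ?_, ?_, ?_⟩
      · exact add_mem (AddSubmonoid.nsmul_mem _ hbmem p) (AddSubmonoid.nsmul_mem _ hy' q)
      · exact AddSubmonoid.nsmul_mem _ hx' q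
      · rw [hgins]
        simp only [smul_eq_mul]
        subst hxy
        ring_nf
        nlinarith [hpq]

lemma cofinite_of_consec (M : AddSubmonoid ℕ) (y : ℕ) (hy : y ∈ M) (hy1 : y + 1 ∈ M) :
    ((M : Set ℕ))ᶜ.Finite := by
  apply Set.Finite.subset (Set.finite_Iio (y * y))
  intro n hn
  rw [Set.mem_compl_iff] at hn
  by_contra h
  apply hn
  have hge : y * y ≤ n := by simpa [Set.mem_Iio] using h
  rcases Nat.eq_zero_or_pos y with hy0 | hy0
  · subst hy0
    have : n • (0 + 1) ∈ M := AddSubmonoid.nsmul_mem _ hy1 n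
    simpa using this
  · have hdm : y * (n / y) + n % y = n := Nat.div_add_mod n y
    have hrq : n % y < y := Nat.mod_lt _ hy0
    have hqy : y ≤ n / y := (Nat.le_div_iff_mul_le hy0).2 hge
    obtain ⟨k, hk⟩ : ∃ k, n / y = n % y + k := ⟨n / y - n % y, by omega⟩
    have hn' : n = k • y + (n % y) • (y + 1) := by
      simp only [smul_eq_mul]
      rw [hk] at hdm
      ring_nf at hdm ⊢
      omega
    rw [hn']
    exact add_mem (AddSubmonoid.nsmul_mem _ hy k) (AddSubmonoid.nsmul_mem _ hy1 (n % y))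
/-- if A ⊆ {1,…,m−1}, |A| = e−1 and gcd(A ∪ {m}) = 1, then
⟨{m} + (A ∪ {0})⟩ is a packed numerical semigroup with multiplicity m and
embedding dimension e, with minimal system of generators {m + a : a ∈ A ∪ {0}}. -/
theorem stmt3 (m e : ℕ) (h2 : 2 ≤ e) (hem : e ≤ m) (A : Finset ℕ)
    (hA : (↑A : Set ℕ) ⊆ Set.Icc 1 (m - 1)) (hcard : A.card = e - 1)
    (hgcd : (insert m A).gcd id = 1) :
    genSet ((fun a => m + a) '' ((↑A : Set ℕ) ∪ {0})) ∈ Cset m e ∧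
    msg (genSet ((fun a => m + a) '' ((↑A : Set ℕ) ∪ {0}))) =
      (fun a => m + a) '' ((↑A : Set ℕ) ∪ {0}) := by
  classical
  have hm2 : 2 ≤ m := le_trans h2 hem
  set f : ℕ → ℕ := fun a => m + a with hf
  set Bs : Set ℕ := f '' ((↑A : Set ℕ) ∪ {0}) with hBsdef
  set M : AddSubmonoid ℕ := AddSubmonoid.closure Bs with hM
  have hSdef : genSet Bs = (M : Set ℕ) := rfl
  -- bounds on generators
  have hBlb : ∀ b ∈ Bs, m ≤ b := by
    rintro b ⟨a, _, rfl⟩; simp [hf]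
  have hBub : ∀ b ∈ Bs, b ≤ 2 * m - 1 := by
    rintro b ⟨a, ha, rfl⟩
    rcases ha with ha | ha
    · have := hA ha; simp only [Set.mem_Icc] at this; simp [hf]; omega
    · simp only [Set.mem_singleton_iff] at ha; subst ha; simp [hf]; omega
  have hmBs : m ∈ Bs := ⟨0, Or.inr rfl, by simp [hf]⟩
  have hmM : m ∈ M := AddSubmonoid.subset_closure hmBs
  -- nonzero elements of M are ≥ m
  have hMel : ∀ s ∈ M, s = 0 ∨ m ≤ s := by
    intro s hs
    induction hs using AddSubmonoid.closure_induction with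
    | mem x hx => exact Or.inr (hBlb x hx)
    | zero => exact Or.inl rfl
    | add x y hx hy ihx ihy =>
      rcases ihx with rfl | ihx
      · simpa using ihy
      · exact Or.inr (le_trans ihx (Nat.le_add_right _ _))
  -- multiplicity
  have hmult : mult (M : Set ℕ) = m := by
    have hmem : m ∈ (M : Set ℕ) \ {0} := ⟨hmM, by simp; omega⟩
    apply le_antisymm (Nat.sInf_le hmem)
    apply le_csInf ⟨m, hmem⟩
    rintro s ⟨hsM, hs0⟩
    rcases hMel s hsM with rfl | h
    · simp at hs0
    · exact h
  -- msg = Bs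
  have hmsg : msg (M : Set ℕ) = Bs := by
    apply Set.Subset.antisymm
    · intro s hs
      obtain ⟨⟨hsM, hs0⟩, hsns⟩ := hs
      simp only [Set.mem_singleton_iff] at hs0
      have key : ∀ t ∈ M, t = 0 ∨ t ∈ Bs ∨
          t ∈ ((M : Set ℕ) \ {0}) + ((M : Set ℕ) \ {0}) := by
        intro t ht
        induction ht using AddSubmonoid.closure_induction with
        | mem x hx => exact Or.inr (Or.inl hx)
        | zero => exact Or.inl rfl
        | add x y hx hy ihx ihy =>
          rcases eq_or_ne x 0 with rfl | hx0
          · simpa using ihy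
          · rcases eq_or_ne y 0 with rfl | hy0
            · simpa using ihx
            · exact Or.inr (Or.inr ⟨x, ⟨hx, hx0⟩, y, ⟨hy, hy0⟩, rfl⟩)
      rcases key s hsM with rfl | h | h
      · exact absurd rfl hs0
      · exact h
      · exact absurd h hsns
    · intro b hb
      have hbm := hBlb b hb
      refine ⟨⟨AddSubmonoid.subset_closure hb, by simp; omega⟩, ?_⟩
      rintro ⟨u, ⟨huM, hu0⟩, v, ⟨hvM, hv0⟩, rfl⟩
      simp only [Set.mem_singleton_iff] at hu0 hv0
      have hu := (hMel u huM).resolve_left hu0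
      have hv := (hMel v hvM).resolve_left hv0
      have hub := hBub _ hb
      have hlb : m ≤ u + v := hBlb _ hb
      beta_reduce at hub hlb
      omega
  -- edim
  have hfinj : Function.Injective f := fun a b h => by simpa [hf] using h
  have h0A : 0 ∉ A := fun h => by have := hA h; simp at this
  have hedim : edim (M : Set ℕ) = e := by
    rw [edim, hmsg, hBsdef, Set.ncard_image_of_injective _ hfinj]
    have : ((↑A : Set ℕ) ∪ {0}) = (↑(insert 0 A) : Set ℕ) := by
      rw [Finset.coe_insert, Set.insert_eq, Set.union_comm]
    rw [this, Set.ncard_coe_finset, Finset.card_insert_of_notMem h0A, hcard]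
    omega
  -- cofiniteness
  have hBfin : (↑((insert 0 A).image f) : Set ℕ) = Bs := by
    rw [Finset.coe_image, Finset.coe_insert, Set.insert_eq, Set.union_comm]
  have hgcd1 : ((insert 0 A).image f).gcd id = 1 := by
    set d := ((insert 0 A).image f).gcd id with hd
    have hdm : d ∣ m := by
      have h : m ∈ (insert 0 A).image f := Finset.mem_image.2 ⟨0, by simp, by simp [hf]⟩
      exact Finset.gcd_dvd h
    have hdall : ∀ b ∈ insert m A, d ∣ b := by
      intro b hb
      rcases Finset.mem_insert.1 hb with rfl | hb
      · exact hdm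
      · have hdmb : d ∣ m + b := by
          have h : m + b ∈ (insert 0 A).image f :=
            Finset.mem_image.2 ⟨b, by simp [hb], by simp [hf]⟩
          exact Finset.gcd_dvd h
        have := Nat.dvd_sub hdmb hdm
        simpa using this
    have : d ∣ (insert m A).gcd id := Finset.dvd_gcd (by simpa using hdall)
    rw [hgcd] at this
    exact Nat.dvd_one.mp this
  obtain ⟨x, y, hx, hy, hxy⟩ := bezout_closure ((insert 0 A).image f)
  have hcof : ((M : Set ℕ))ᶜ.Finite := by
    apply cofinite_of_consec M y
    · rw [hBfin] at hy; exact hy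
    · rw [hBfin] at hx; rw [hgcd1] at hxy; rw [← hxy]; exact hx
  -- assemble
  have hNS : IsNumericalSemigroup (M : Set ℕ) :=
    ⟨zero_mem M, fun a ha b hb => add_mem ha hb, hcof⟩
  have hpacked : IsPacked (M : Set ℕ) := by
    intro s hs
    rw [hmsg] at hs
    rw [hmult]
    exact ⟨hBlb s hs, hBub s hs⟩
  exact ⟨⟨⟨hNS, hmult, hedim⟩, hpacked⟩, hmsg⟩
end

section
/- Let m be a prime number and let e be an integer with 2 ≤ e ≤ m. Then the set C(m,e) of packed numerical semigroups with multiplicity m and embedding dimension e is finite and has cardinality equal to the binomial coefficient (m−1 choose e−1). -/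
open scoped Pointwise

lemma genSet_lower {m : ℕ} {B : Set ℕ} (hB : B ⊆ Set.Ici m) :
    ∀ x ∈ genSet B, x = 0 ∨ m ≤ x := by
  intro x hx
  induction hx using AddSubmonoid.closure_induction with
  | mem y hy => exact Or.inr (hB hy)
  | zero => exact Or.inl rfl
  | add y z hy hz ihy ihz =>
    rcases ihy with rfl | h
    · simpa using ihz
    · exact Or.inr (le_trans h (Nat.le_add_right _ _))

lemma genSet_cases {m : ℕ} {B : Set ℕ} (hm : 1 ≤ m) (hB : B ⊆ Set.Ici m) :
    ∀ x ∈ genSet B, x = 0 ∨ x ∈ B ∨ x ∈ ((genSet B \ {0}) + (genSet B \ {0})) := by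
  have hne : ∀ x, x ∈ B ∨ x ∈ ((genSet B \ {0}) + (genSet B \ {0})) →
      x ∈ genSet B \ {0} := by
    rintro x (hx | hx)
    · refine ⟨AddSubmonoid.subset_closure hx, ?_⟩
      have := hB hx; simp only [Set.mem_Ici] at this
      simp only [Set.mem_singleton_iff]; omega
    · rw [Set.mem_add] at hx
      obtain ⟨p, hp, q, hq, rfl⟩ := hx
      refine ⟨AddSubmonoid.add_mem _ hp.1 hq.1, ?_⟩
      have hp0 : p ≠ 0 := hp.2
      simp only [Set.mem_singleton_iff]; omega
  intro x hx
  induction hx using AddSubmonoid.closure_induction with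
  | mem y hy => exact Or.inr (Or.inl hy)
  | zero => exact Or.inl rfl
  | add y z hy hz ihy ihz =>
    rcases ihy with rfl | ihy
    · simpa using ihz
    rcases ihz with rfl | ihz
    · exact Or.inr ihy
    exact Or.inr (Or.inr (Set.add_mem_add (hne y ihy) (hne z ihz)))

lemma mult_genSet {m : ℕ} {B : Set ℕ} (hm : 1 ≤ m) (hB : B ⊆ Set.Ici m) (hmB : m ∈ B) :
    mult (genSet B) = m := by
  have hmem : m ∈ genSet B \ {0} :=
    ⟨AddSubmonoid.subset_closure hmB, by simp only [Set.mem_singleton_iff]; omega⟩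
  have h1 : sInf (genSet B \ {0}) ≤ m := Nat.sInf_le hmem
  have h2 := Nat.sInf_mem ⟨m, hmem⟩
  rcases genSet_lower hB _ h2.1 with h | h
  · exact absurd h h2.2
  · exact le_antisymm h1 h

lemma msg_genSet {m : ℕ} {B : Set ℕ} (hm : 1 ≤ m) (hB : B ⊆ Set.Icc m (2*m-1)) :
    msg (genSet B) = B := by
  have hB' : B ⊆ Set.Ici m := fun x hx => (hB hx).1
  ext x
  constructor
  · rintro ⟨⟨hx, hx0⟩, hns⟩
    rcases genSet_cases hm hB' x hx with rfl | h | h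
    · exact absurd rfl hx0
    · exact h
    · exact absurd h hns
  · intro hx
    have hxm := hB hx
    simp only [Set.mem_Icc] at hxm
    refine ⟨⟨AddSubmonoid.subset_closure hx, ?_⟩, ?_⟩
    · simp only [Set.mem_singleton_iff]; omega
    · intro hsum
      rw [Set.mem_add] at hsum
      obtain ⟨p, hp, q, hq, hpq⟩ := hsum
      rcases genSet_lower hB' p hp.1 with h | h
      · exact hp.2 h
      rcases genSet_lower hB' q hq.1 with h' | h'
      · exact hq.2 h'
      omega

lemma cofinite_genSet {m a : ℕ} {B : Set ℕ} (hm : m.Prime) (hmB : m ∈ B) (haB : a ∈ B)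
    (hma : ¬ m ∣ a) : (genSet B)ᶜ.Finite := by
  haveI : Fact m.Prime := ⟨hm⟩
  haveI : NeZero m := ⟨hm.ne_zero⟩
  have key : ∀ x, m * a ≤ x → x ∈ genSet B := by
    intro x hx
    set u : ZMod m := (x : ZMod m) * (a : ZMod m)⁻¹ with hu
    set j : ℕ := u.val with hj
    have hjm : j < m := ZMod.val_lt u
    have ha0 : (a : ZMod m) ≠ 0 :=
      fun h => hma ((ZMod.natCast_eq_zero_iff a m).mp h)
    have hcast : ((j * a : ℕ) : ZMod m) = (x : ZMod m) := by
      push_cast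
      rw [hj, ZMod.natCast_rightInverse u, hu, mul_assoc, inv_mul_cancel₀ ha0, mul_one]
    have hle : j * a ≤ x := by
      calc j * a ≤ (m - 1) * a := Nat.mul_le_mul_right a (by omega)
        _ ≤ m * a := Nat.mul_le_mul_right a (by omega)
        _ ≤ x := hx
    have hmod : m ∣ x - j * a :=
      (Nat.modEq_iff_dvd' hle).mp ((ZMod.natCast_eq_natCast_iff _ _ _).mp hcast)
    obtain ⟨t, ht⟩ := hmod
    have hxe : x = j * a + m * t := by rw [← ht]; exact (Nat.add_sub_cancel' hle).symm
    rw [hxe]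
    have h1 : j * a ∈ AddSubmonoid.closure B := by
      have := AddSubmonoid.nsmul_mem _ ((AddSubmonoid.subset_closure haB : a ∈ AddSubmonoid.closure B)) j
      simpa [nsmul_eq_mul] using this
    have h2 : m * t ∈ AddSubmonoid.closure B := by
      have := AddSubmonoid.nsmul_mem _ ((AddSubmonoid.subset_closure hmB : m ∈ AddSubmonoid.closure B)) t
      rw [mul_comm]
      simpa [nsmul_eq_mul] using this
    exact AddSubmonoid.add_mem _ h1 h2
  apply (Set.finite_Iio (m * a)).subset
  intro x hx
  simp only [Set.mem_compl_iff] at hx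
  simp only [Set.mem_Iio]
  by_contra h
  exact hx (key x (by omega))

lemma ns_closure_msg {S : Set ℕ} (hS : IsNumericalSemigroup S) : genSet (msg S) = S := by
  obtain ⟨h0, hadd, hcof⟩ := hS
  apply Set.Subset.antisymm
  · have : AddSubmonoid.closure (msg S) ≤
        ({ carrier := S, add_mem' := fun ha hb => hadd _ ha _ hb,
           zero_mem' := h0 } : AddSubmonoid ℕ) := by
      apply AddSubmonoid.closure_le.mpr
      intro x hx
      exact hx.1.1
    exact this
  · intro x
    induction x using Nat.strong_induction_on with
    | _ x ih =>
      intro hx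
      rcases eq_or_ne x 0 with rfl | hx0
      · exact AddSubmonoid.zero_mem _
      by_cases hmsg : x ∈ msg S
      · exact AddSubmonoid.subset_closure hmsg
      have hsum : x ∈ (S \ {0}) + (S \ {0}) := by
        by_contra h
        exact hmsg ⟨⟨hx, hx0⟩, h⟩
      rw [Set.mem_add] at hsum
      obtain ⟨p, hp, q, hq, rfl⟩ := hsum
      have hp0 : p ≠ 0 := hp.2
      have hq0 : q ≠ 0 := hq.2
      exact AddSubmonoid.add_mem _ (ih p (by omega) hp.1) (ih q (by omega) hq.1)

/-- if m is prime and 2 ≤ e ≤ m, then C(m,e) is finite with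
cardinality (m−1 choose e−1). -/
theorem stmt5 (m e : ℕ) (hm : m.Prime) (h2 : 2 ≤ e) (hem : e ≤ m) :
    (Cset m e).Finite ∧ (Cset m e).ncard = (m - 1).choose (e - 1) := by
  have hm2 : 2 ≤ m := hm.two_le
  set D : Set (Set ℕ) :=
    {A : Set ℕ | A ⊆ Set.Icc (m+1) (2*m-1) ∧ A.ncard = e - 1} with hDdef
  have hins : ∀ A ∈ D, insert m A ⊆ Set.Icc m (2*m-1) := by
    rintro A ⟨hA1, _⟩ x hx
    rcases hx with rfl | hx
    · simp only [Set.mem_Icc]; omega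
    · have := hA1 hx
      simp only [Set.mem_Icc] at this ⊢
      omega
  -- the key set equality
  have hkey : Cset m e = (fun A => genSet (insert m A)) '' D := by
    ext S
    constructor
    · rintro ⟨⟨hNS, hmult, hedim⟩, hpacked⟩
      have hpacked' : msg S ⊆ Set.Icc m (2*m-1) := by
        have : msg S ⊆ Set.Icc (mult S) (2 * mult S - 1) := hpacked
        rwa [hmult] at this
      have hfin : (msg S).Finite := (Set.finite_Icc m (2*m-1)).subset hpacked'
      -- m ∈ msg S
      have hSne : (S \ {0}).Nonempty := by
        have hSinf : S.Infinite := by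
          have := hNS.2.2.infinite_compl
          rwa [compl_compl] at this
        exact (hSinf.diff (Set.finite_singleton 0)).nonempty
      have hmS : m ∈ S \ {0} := by
        have := Nat.sInf_mem hSne
        rwa [show sInf (S \ {0}) = m from hmult] at this
      have hlow : ∀ x ∈ S \ {0}, m ≤ x := by
        intro x hx
        have := Nat.sInf_le hx
        rwa [show sInf (S \ {0}) = m from hmult] at this
      have hmmsg : m ∈ msg S := by
        refine ⟨hmS, ?_⟩
        intro hsum
        rw [Set.mem_add] at hsum
        obtain ⟨p, hp, q, hq, hpq⟩ := hsum
        have := hlow p hp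
        have := hlow q hq
        omega
      refine ⟨msg S \ {m}, ⟨?_, ?_⟩, ?_⟩
      · intro x hx
        have h1 := hpacked' hx.1
        have h2 : x ≠ m := hx.2
        simp only [Set.mem_Icc] at h1 ⊢
        omega
      · rw [Set.ncard_diff_singleton_of_mem hmmsg,
          show (msg S).ncard = e from hedim]
      · show genSet (insert m (msg S \ {m})) = S
        rw [Set.insert_diff_singleton, Set.insert_eq_of_mem hmmsg]
        exact ns_closure_msg hNS
    · rintro ⟨A, hA, rfl⟩
      obtain ⟨hA1, hA2⟩ := hA
      have hAfin : A.Finite := (Set.finite_Icc (m+1) (2*m-1)).subset hA1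
      have hmA : m ∉ A := by
        intro h
        have := hA1 h
        simp only [Set.mem_Icc] at this
        omega
      have hB := hins A ⟨hA1, hA2⟩
      have hB' : insert m A ⊆ Set.Ici m := fun x hx => (hB hx).1
      have hmsg : msg (genSet (insert m A)) = insert m A := msg_genSet (by omega) hB
      have hmult : mult (genSet (insert m A)) = m :=
        mult_genSet (by omega) hB' (Set.mem_insert m A)
      -- get an element a of A not divisible by m
      obtain ⟨a, haA⟩ := Set.nonempty_of_ncard_ne_zero (s := A) (by omega)
      have haI := hA1 haA
      simp only [Set.mem_Icc] at haI
      have hma : ¬ m ∣ a := by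
        rintro ⟨k, rfl⟩
        rcases Nat.lt_or_ge k 2 with hk | hk
        · interval_cases k <;> omega
        · have : 2 * m ≤ m * k := by
            calc 2 * m = m * 2 := by ring
              _ ≤ m * k := Nat.mul_le_mul_left m hk
          omega
      refine ⟨⟨⟨AddSubmonoid.zero_mem _, fun p hp q hq => AddSubmonoid.add_mem _ hp hq,
        cofinite_genSet hm (Set.mem_insert m A) (Set.mem_insert_of_mem m haA) hma⟩,
        hmult, ?_⟩, ?_⟩
      · show (msg (genSet (insert m A))).ncard = e
        rw [hmsg, Set.ncard_insert_of_notMem hmA hAfin, hA2]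
        omega
      · show msg (genSet (insert m A)) ⊆
          Set.Icc (mult (genSet (insert m A))) (2 * mult (genSet (insert m A)) - 1)
        rw [hmsg, hmult]
        exact hB
  -- injectivity on D
  have hinj : Set.InjOn (fun A => genSet (insert m A)) D := by
    intro A1 hA1 A2 hA2 heq
    have h1 : msg (genSet (insert m A1)) = insert m A1 :=
      msg_genSet (by omega) (hins A1 hA1)
    have h2 : msg (genSet (insert m A2)) = insert m A2 :=
      msg_genSet (by omega) (hins A2 hA2)
    have hii : insert m A1 = insert m A2 := by
      rw [← h1, ← h2]; simp only at heq; rw [heq]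
    have hne : ∀ A ∈ D, m ∉ A := by
      rintro A ⟨hs, _⟩ h
      have := hs h
      simp only [Set.mem_Icc] at this
      omega
    have e1 : A1 = insert m A1 \ {m} := by
      rw [Set.insert_diff_self_of_notMem (hne A1 hA1)]
    have e2 : A2 = insert m A2 \ {m} := by
      rw [Set.insert_diff_self_of_notMem (hne A2 hA2)]
    rw [e1, e2, hii]
  -- counting D
  have hcards : (Finset.Icc (m+1) (2*m-1)).card = m - 1 := by
    rw [Nat.card_Icc]; omega
  have hD : D = (fun t : Finset ℕ => (t : Set ℕ)) ''
      ↑((Finset.Icc (m+1) (2*m-1)).powersetCard (e-1)) := by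
    ext A
    simp only [hDdef, Set.mem_setOf_eq, Set.mem_image, Finset.mem_coe,
      Finset.mem_powersetCard]
    constructor
    · rintro ⟨hsub, hcardA⟩
      have hfin : A.Finite := (Set.finite_Icc (m+1) (2*m-1)).subset hsub
      refine ⟨hfin.toFinset, ⟨?_, ?_⟩, hfin.coe_toFinset⟩
      · intro x hx
        rw [Set.Finite.mem_toFinset] at hx
        have := hsub hx
        simpa [Finset.mem_Icc, Set.mem_Icc] using this
      · rw [← Set.ncard_coe_finset, hfin.coe_toFinset]; exact hcardA
    · rintro ⟨t, ⟨hts, htc⟩, rfl⟩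
      constructor
      · intro x hx
        have := hts (by exact_mod_cast hx)
        simpa [Finset.mem_Icc, Set.mem_Icc] using this
      · rw [Set.ncard_coe_finset]; exact htc
  have hDfin : D.Finite := by
    rw [hD]
    exact (((Finset.Icc (m+1) (2*m-1)).powersetCard (e-1)).finite_toSet).image _
  have hDcard : D.ncard = (m - 1).choose (e - 1) := by
    rw [hD, Set.ncard_image_of_injective _ Finset.coe_injective,
      Set.ncard_coe_finset, Finset.card_powersetCard, hcards]
  constructor
  · rw [hkey]; exact hDfin.image _
  · rw [hkey, Set.ncard_image_of_injOn hinj, hDcard]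
end

section
/- Let {n₁ < n₂ < ⋯ < n_e} be the minimal system of generators of a numerical semigroup and suppose n_e − n₁ > n₁. Then {n₁, …, n_{e−1}, n_e − n₁} is the minimal system of generators of a numerical semigroup; that is, the submonoid of ℕ generated by {n₁, …, n_{e−1}, n_e − n₁} is a numerical semigroup whose minimal system of generators is exactly {n₁, …, n_{e−1}, n_e − n₁}. -/
open scoped Pointwise

section Helpers

private lemma mem_sd_iff {S : Set ℕ} {x : ℕ} : x ∈ S \ {0} ↔ x ∈ S ∧ x ≠ 0 := by
  simp [Set.mem_diff]

private lemma list_sum_mem_of_closed {S : Set ℕ} (h0 : 0 ∈ S)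
    (hadd : ∀ a ∈ S, ∀ b ∈ S, a + b ∈ S) :
    ∀ l : List ℕ, (∀ a ∈ l, a ∈ S) → l.sum ∈ S := by
  intro l
  induction l with
  | nil => intro _; simpa using h0
  | cons a t ih =>
      intro h
      simp only [List.sum_cons]
      exact hadd a (h a (by simp)) t.sum (ih fun b hb => h b (by simp [hb]))

private lemma list_sum_pos {l : List ℕ} (hne : l ≠ []) {m : ℕ}
    (hpos : ∀ a ∈ l, m ≤ a) : m ≤ l.sum := by
  obtain ⟨a, t, rfl⟩ := List.exists_cons_of_ne_nil hne
  have := hpos a (by simp)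
  simp only [List.sum_cons]
  omega

private lemma subset_genSet_msg {S : Set ℕ}
    (hadd : ∀ a ∈ S, ∀ b ∈ S, a + b ∈ S) : S ⊆ genSet (msg S) := by
  intro n hn
  induction n using Nat.strong_induction_on with
  | _ n ih =>
    rcases eq_or_ne n 0 with rfl | hn0
    · exact zero_mem _
    by_cases hm : n ∈ msg S
    · exact AddSubmonoid.subset_closure hm
    · have hns : n ∈ S \ {0} := mem_sd_iff.mpr ⟨hn, hn0⟩
      have hsum : n ∈ (S \ {0}) + (S \ {0}) := by
        by_contra hcon
        exact hm ⟨hns, hcon⟩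
      obtain ⟨a, ha, b, hb, hab⟩ := Set.mem_add.mp hsum
      have ha' := mem_sd_iff.mp ha
      have hb' := mem_sd_iff.mp hb
      have : a + b ∈ genSet (msg S) :=
        add_mem (ih a (by omega) ha'.1) (ih b (by omega) hb'.1)
      rwa [hab] at this

end Helpers

/-- Lemma 7: if {n₁ < ⋯ < n_e} = msg(S) for a numerical semigroup S
and n_e − n₁ > n₁, then (msg(S) ∖ {n_e}) ∪ {n_e − n₁} generates a numerical
semigroup whose minimal system of generators is exactly that set.
Here n_e = sSup (msg S) and n₁ = sInf (msg S). -/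
theorem stmt6 (S : Set ℕ) (hS : IsNumericalSemigroup S)
    (hgt : sSup (msg S) - sInf (msg S) > sInf (msg S)) :
    IsNumericalSemigroup
      (genSet ((msg S \ {sSup (msg S)}) ∪ {sSup (msg S) - sInf (msg S)})) ∧
    msg (genSet ((msg S \ {sSup (msg S)}) ∪ {sSup (msg S) - sInf (msg S)})) =
      (msg S \ {sSup (msg S)}) ∪ {sSup (msg S) - sInf (msg S)} := by
  obtain ⟨h0S, haddS, hfinS⟩ := hS
  set q : ℕ := sSup (msg S) - sInf (msg S) with hqdef
  set B : Set ℕ := (msg S \ {sSup (msg S)}) ∪ {q} with hBdef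
  have hmsgne : (msg S).Nonempty := by
    rcases Set.eq_empty_or_nonempty (msg S) with h | h
    · exfalso
      rw [hqdef, h] at hgt
      simp [csSup_empty, Nat.sInf_empty] at hgt
    · exact h
  have hn1mem : sInf (msg S) ∈ msg S := Nat.sInf_mem hmsgne
  set n1 : ℕ := sInf (msg S) with hn1def
  have hn1pos : 0 < n1 := by
    have := mem_sd_iff.mp hn1mem.1
    omega
  set N : ℕ := sSup Sᶜ + 1 with hNdef
  have hub : ∀ x, N ≤ x → x ∈ S := by
    intro x hx
    by_contra hxS
    have : x ≤ sSup Sᶜ := le_csSup hfinS.bddAbove hxS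
    omega
  have hbdd : BddAbove (msg S) := by
    refine ⟨N + n1, fun x hx => ?_⟩
    by_contra h
    push_neg at h
    have hx1 : x - n1 ∈ S := hub _ (by omega)
    have hsum : x ∈ (S \ {0}) + (S \ {0}) := by
      have h2 : n1 + (x - n1) ∈ (S \ {0}) + (S \ {0}) :=
        Set.add_mem_add (mem_sd_iff.mpr ⟨hn1mem.1.1, by omega⟩)
          (mem_sd_iff.mpr ⟨hx1, by omega⟩)
      have hxe : n1 + (x - n1) = x := by omega
      rwa [hxe] at h2
    exact hx.2 hsum
  have hnemem : sSup (msg S) ∈ msg S := Nat.sSup_mem hmsgne hbdd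
  set ne' : ℕ := sSup (msg S) with hnedef
  have hqgt : q > n1 := hgt
  have hnegt : ne' = n1 + q := by
    have : n1 ≤ ne' := le_csSup hbdd hn1mem
    omega
  have hn1ne : n1 ≠ ne' := by omega
  have hn1B : n1 ∈ B :=
    Set.mem_union_left _ ⟨hn1mem, by simpa using hn1ne⟩
  have hqB : q ∈ B := Set.mem_union_right _ rfl
  have hminB : ∀ b ∈ B, n1 ≤ b := by
    intro b hb
    rcases hb with ⟨hb, _⟩ | hb
    · exact Nat.sInf_le hb
    · simp only [Set.mem_singleton_iff] at hb; omega
  have hBpos : ∀ b ∈ B, 0 < b := fun b hb => lt_of_lt_of_le hn1pos (hminB b hb)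
  -- key combinatorial fact: no element of B is a sum of a list of ≥ 2 elements of B
  have key : ∀ l : List ℕ, (∀ a ∈ l, a ∈ B) → 2 ≤ l.length → l.sum ∉ B := by
    intro l hl hlen hmem
    by_cases hql : q ∈ l
    · obtain ⟨l₁, l₂, rfl⟩ := List.append_of_mem hql
      have hrest : l₁ ++ l₂ ≠ [] := by
        intro h
        have h1 := List.append_eq_nil_iff.mp h
        rw [h1.1, h1.2] at hlen
        simp at hlen
      have hrestge : n1 ≤ (l₁ ++ l₂).sum := by
        refine list_sum_pos hrest ?_
        intro a ha
        refine hminB a (hl a ?_)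
        simp only [List.mem_append, List.mem_cons] at ha ⊢
        tauto
      have hsum : (l₁ ++ q :: l₂).sum = q + ((l₁ ++ l₂).sum) := by
        simp [List.sum_append, List.sum_cons]
        ring
      have hge : ne' ≤ (l₁ ++ q :: l₂).sum := by
        rw [hsum]; omega
      rcases hmem with ⟨hm, hne⟩ | hm
      · have hle : (l₁ ++ q :: l₂).sum ≤ ne' := le_csSup hbdd hm
        simp only [Set.mem_singleton_iff] at hne
        have : (l₁ ++ q :: l₂).sum = ne' := le_antisymm hle hge
        exact hne this
      · simp only [Set.mem_singleton_iff] at hm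
        rw [hsum] at hm
        omega
    · have hlS : ∀ a ∈ l, a ∈ msg S := by
        intro a ha
        rcases hl a ha with ⟨hm, _⟩ | hm
        · exact hm
        · simp only [Set.mem_singleton_iff] at hm
          exact absurd (hm ▸ ha) hql
      obtain ⟨a, t, rfl⟩ : ∃ a t, l = a :: t := by
        cases l with
        | nil => simp at hlen
        | cons a t => exact ⟨a, t, rfl⟩
      have ht : t ≠ [] := by
        intro h; rw [h] at hlen; simp at hlen
      have htS : t.sum ∈ S :=
        list_sum_mem_of_closed h0S haddS t (fun b hb => (hlS b (by simp [hb])).1.1)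
      have htpos : 0 < t.sum := by
        have : n1 ≤ t.sum := list_sum_pos ht (fun b hb => Nat.sInf_le (hlS b (by simp [hb])))
        omega
      have hsum2 : (a :: t).sum ∈ (S \ {0}) + (S \ {0}) := by
        have h2 := Set.add_mem_add (hlS a (by simp)).1 (mem_sd_iff.mpr ⟨htS, by omega⟩)
        simpa [List.sum_cons] using h2
      rcases hmem with ⟨hm, _⟩ | hm
      · exact hm.2 hsum2
      · simp only [Set.mem_singleton_iff] at hm
        have hqS : q ∈ S \ {0} := by
          rw [← hm]
          exact mem_sd_iff.mpr
            ⟨list_sum_mem_of_closed h0S haddS _ (fun b hb => (hlS b hb).1.1),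
             by rw [hm]; omega⟩
        have hneS : ne' ∈ (S \ {0}) + (S \ {0}) := by
          rw [hnegt]
          exact Set.add_mem_add (mem_sd_iff.mpr ⟨hn1mem.1.1, by omega⟩) hqS
        exact hnemem.2 hneS
  -- no element of B is a sum of two nonzero elements of genSet B
  set T : Set ℕ := genSet B with hTdef
  have hlist : ∀ x ∈ T, ∃ l : List ℕ, (∀ a ∈ l, a ∈ B) ∧ l.sum = x := by
    intro x hx
    exact AddSubmonoid.exists_list_of_mem_closure hx
  have hnotsum : ∀ b ∈ B, b ∉ (T \ {0}) + (T \ {0}) := by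
    intro b hb hcon
    obtain ⟨u, hu, v, hv, huv⟩ := Set.mem_add.mp hcon
    obtain ⟨lu, hlu, hsu⟩ := hlist u (mem_sd_iff.mp hu).1
    obtain ⟨lv, hlv, hsv⟩ := hlist v (mem_sd_iff.mp hv).1
    have hlune : lu ≠ [] := by
      intro h; rw [h] at hsu; exact (mem_sd_iff.mp hu).2 (by simpa using hsu.symm)
    have hlvne : lv ≠ [] := by
      intro h; rw [h] at hsv; exact (mem_sd_iff.mp hv).2 (by simpa using hsv.symm)
    have hlen : 2 ≤ (lu ++ lv).length := by
      have h1 : 1 ≤ lu.length := List.length_pos_iff.mpr hlune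
      have h2 : 1 ≤ lv.length := List.length_pos_iff.mpr hlvne
      simp only [List.length_append]
      omega
    have hmemB : ∀ a ∈ lu ++ lv, a ∈ B := by
      intro a ha
      rcases List.mem_append.mp ha with h | h
      · exact hlu a h
      · exact hlv a h
    have hsum : (lu ++ lv).sum = b := by
      rw [List.sum_append, hsu, hsv, huv]
    exact key (lu ++ lv) hmemB hlen (hsum ▸ hb)
  -- msg T = B
  have hmsgT : msg T = B := by
    ext x
    constructor
    · rintro ⟨hxT, hxns⟩
      have hx0 : x ≠ 0 := (mem_sd_iff.mp hxT).2
      obtain ⟨l, hl, hsl⟩ := hlist x (mem_sd_iff.mp hxT).1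
      match l, hl, hsl with
      | [], _, hsl => exact absurd hsl.symm (by simpa using hx0)
      | [a], hl, hsl =>
          have : a = x := by simpa using hsl
          exact this ▸ hl a (by simp)
      | a :: b :: t, hl, hsl =>
          exfalso
          apply hxns
          have haT : a ∈ T \ {0} := mem_sd_iff.mpr
            ⟨AddSubmonoid.subset_closure (hl a (by simp)),
             by have := hBpos a (hl a (by simp)); omega⟩
          have htT : (b :: t).sum ∈ T := by
            refine list_sum_mem ?_
            intro y hy
            exact AddSubmonoid.subset_closure (hl y (by simp only [List.mem_cons] at hy ⊢; tauto))
          have htpos : 0 < (b :: t).sum := by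
            have hb' : n1 ≤ b := hminB b (hl b (by simp))
            simp only [List.sum_cons]
            omega
          have h2 := Set.add_mem_add haT (mem_sd_iff.mpr ⟨htT, by omega⟩)
          have hxe : a + (b :: t).sum = x := by simpa [List.sum_cons] using hsl
          rwa [hxe] at h2
    · intro hb
      refine ⟨mem_sd_iff.mpr ⟨AddSubmonoid.subset_closure hb, ?_⟩, hnotsum x hb⟩
      have := hBpos x hb
      omega
  refine ⟨⟨zero_mem (AddSubmonoid.closure B), fun a ha b hb => add_mem ha hb, ?_⟩, hmsgT⟩
  -- complement of T is finite since S ⊆ T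
  have hmsgB : msg S ⊆ T := by
    intro x hx
    by_cases hxe : x = ne'
    · rw [hxe, hnegt]
      exact add_mem (AddSubmonoid.subset_closure hn1B) (AddSubmonoid.subset_closure hqB)
    · exact AddSubmonoid.subset_closure (Set.mem_union_left _ ⟨hx, by simpa using hxe⟩)
  have hST : S ⊆ T := by
    intro x hx
    have h1 : x ∈ genSet (msg S) := subset_genSet_msg haddS hx
    exact AddSubmonoid.closure_le.mpr hmsgB h1
  exact hfinS.subset (Set.compl_subset_compl.mpr hST)
end

section
/- Let 2 ≤ e ≤ m be integers, let S ∈ C(m,e), let P ∈ [S], and write msg(P) = {n₁ < n₂ < ⋯ < n_e} (so n₁ = m). Then a numerical semigroup H is a child of P in the graph G([S]) (i.e. H ∈ [S] and msg(P) = (msg(H) ∖ {M(H)}) ∪ {M(H) − m}, where M(H) = max msg(H)) if and only if there exists k ∈ {2, …, e} with n_k + n₁ > n_e and n_k + n₁ ∉ ⟨{n₁,…,n_e} ∖ {n_k}⟩ such that H = ⟨({n₁,…,n_e} ∖ {n_k}) ∪ {n_k + n₁}⟩; moreover for such H one has msg(H) = ({n₁,…,n_e} ∖ {n_k}) ∪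 {n_k + n₁}. -/
open scoped Pointwise

namespace Stmt7Aux

lemma mem_genSet {B : Set ℕ} {x : ℕ} (hx : x ∈ B) : x ∈ genSet B :=
  AddSubmonoid.subset_closure hx

lemma genSet_zero (B : Set ℕ) : 0 ∈ genSet B := (AddSubmonoid.closure B).zero_mem

lemma genSet_add {B : Set ℕ} {x y : ℕ} (hx : x ∈ genSet B) (hy : y ∈ genSet B) :
    x + y ∈ genSet B := (AddSubmonoid.closure B).add_mem hx hy

lemma genSet_mono {A B : Set ℕ} (h : A ⊆ B) : genSet A ⊆ genSet B :=
  AddSubmonoid.closure_mono h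

lemma exists_list {B : Set ℕ} {x : ℕ} (hx : x ∈ genSet B) :
    ∃ l : List ℕ, (∀ y ∈ l, y ∈ B) ∧ l.sum = x :=
  AddSubmonoid.exists_list_of_mem_closure hx

lemma list_mem_genSet {B : Set ℕ} {l : List ℕ} (h : ∀ y ∈ l, y ∈ B) :
    l.sum ∈ genSet B := by
  induction l with
  | nil => exact genSet_zero B
  | cons a t ih =>
    simpa using genSet_add (mem_genSet (h a (by simp))) (ih fun y hy => h y (by simp [hy]))

lemma list_sum_mem {S : Set ℕ} (h0 : 0 ∈ S) (hadd : ∀ a ∈ S, ∀ b ∈ S, a + b ∈ S)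
    {l : List ℕ} (h : ∀ y ∈ l, y ∈ S) : l.sum ∈ S := by
  induction l with
  | nil => simpa using h0
  | cons a t ih =>
    simpa using hadd a (h a (by simp)) t.sum (ih fun y hy => h y (by simp [hy]))

lemma list_sum_pos {l : List ℕ} (h : ∀ y ∈ l, y ≠ 0) (hne : l ≠ []) : l.sum ≠ 0 := by
  cases l with
  | nil => exact absurd rfl hne
  | cons a t => have := h a (by simp); simp; omega

lemma genSet_pos_le {B : Set ℕ} {c x : ℕ} (hB : ∀ b ∈ B, c ≤ b)
    (hx : x ∈ genSet B) (hx0 : x ≠ 0) : c ≤ x := by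
  obtain ⟨l, hl, rfl⟩ := exists_list hx
  cases l with
  | nil => simp at hx0
  | cons a t =>
    have := hB a (hl a (by simp))
    simp only [List.sum_cons]
    omega

/-- Lemma C: msg generates a numerical semigroup. -/
lemma genSet_msg_eq {S : Set ℕ} (hS : IsNumericalSemigroup S) : genSet (msg S) = S := by
  apply subset_antisymm
  · intro x hx
    obtain ⟨l, hl, rfl⟩ := exists_list hx
    exact list_sum_mem hS.1 hS.2.1 fun y hy => (hl y hy).1.1
  · intro x
    induction x using Nat.strong_induction_on with
    | _ x ih =>
      intro hx
      rcases eq_or_ne x 0 with rfl | hx0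
      · exact genSet_zero _
      by_cases hm : x ∈ msg S
      · exact mem_genSet hm
      · have hxs : x ∈ S \ {0} := ⟨hx, hx0⟩
        have hsum : x ∈ (S \ {0}) + (S \ {0}) := by
          by_contra h; exact hm ⟨hxs, h⟩
        rw [Set.mem_add] at hsum
        obtain ⟨a, ha, b, hb, hab⟩ := hsum
        have ha0 : a ≠ 0 := by simpa using ha.2
        have hb0 : b ≠ 0 := by simpa using hb.2
        have h1 := ih a (by omega) ha.1
        have h2 := ih b (by omega) hb.1
        rw [← hab]
        exact genSet_add h1 h2

/-- Lemma D: a minimal generator is not generated by the others. -/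
lemma msg_not_in_rest {S : Set ℕ} (hS : IsNumericalSemigroup S) {g : ℕ} (hg : g ∈ msg S) :
    g ∉ genSet (msg S \ {g}) := by
  intro hmem
  obtain ⟨l, hl, hsum⟩ := exists_list hmem
  have hg0 : g ≠ 0 := by simpa using hg.1.2
  match l, hsum with
  | [], hsum => simp at hsum; exact hg0 hsum.symm
  | [a], hsum =>
    have := hl a (by simp)
    simp at hsum
    have hne : a ≠ g := by simpa using this.2
    exact hne hsum
  | a :: b :: t, hsum =>
    apply hg.2
    rw [Set.mem_add]
    refine ⟨a, (hl a (by simp)).1.1, (b :: t).sum, ⟨?_, ?_⟩, by simpa using hsum⟩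
    · exact list_sum_mem hS.1 hS.2.1 fun y hy => (hl y (by simp [hy])).1.1.1
    · simp only [Set.mem_singleton_iff]
      exact list_sum_pos (fun y hy => by simpa using (hl y (by simp [hy])).1.1.2) (by simp)

/-- Lemma A: msg of genSet B equals B when B is a minimal generating set. -/
lemma msg_genSet {B : Set ℕ} (h0 : 0 ∉ B)
    (hmin : ∀ b ∈ B, b ∉ genSet (B \ {b})) : msg (genSet B) = B := by
  apply subset_antisymm
  · intro x hx
    obtain ⟨l, hl, hsum⟩ := exists_list hx.1.1
    have hx0 : x ≠ 0 := by simpa using hx.1.2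
    match l, hsum with
    | [], hsum => simp at hsum; exact absurd hsum.symm hx0
    | [a], hsum => simp at hsum; exact hsum ▸ hl a (by simp)
    | a :: b :: t, hsum =>
      exfalso
      apply hx.2
      rw [Set.mem_add]
      have hb0 : ∀ y ∈ B, y ≠ 0 := fun y hy h => h0 (h ▸ hy)
      refine ⟨a, ⟨mem_genSet (hl a (by simp)), ?_⟩, (b :: t).sum,
        ⟨list_mem_genSet fun y hy => hl y (by simp [hy]), ?_⟩, by simpa using hsum⟩
      · simpa using hb0 a (hl a (by simp))
      · simp only [Set.mem_singleton_iff]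
        exact list_sum_pos (fun y hy => hb0 y (hl y (by simp [hy]))) (by simp)
  · intro b hb
    have hb0 : b ≠ 0 := fun h => h0 (h ▸ hb)
    refine ⟨⟨mem_genSet hb, by simpa using hb0⟩, ?_⟩
    intro hsum
    rw [Set.mem_add] at hsum
    obtain ⟨s, hs, t, ht, hst⟩ := hsum
    have hs0 : s ≠ 0 := by simpa using hs.2
    have ht0 : t ≠ 0 := by simpa using ht.2
    obtain ⟨ls, hls, hlss⟩ := exists_list hs.1
    obtain ⟨lt, hlt, hlts⟩ := exists_list ht.1
    apply hmin b hb
    have : (ls ++ lt).sum = b := by rw [List.sum_append, hlss, hlts, hst]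
    rw [← this]
    apply list_mem_genSet
    intro y hy
    rcases List.mem_append.mp hy with h | h
    · refine ⟨hls y h, ?_⟩
      simp only [Set.mem_singleton_iff]
      have : y ≤ ls.sum := List.single_le_sum (fun x _ => Nat.zero_le x) y h
      omega
    · refine ⟨hlt y h, ?_⟩
      simp only [Set.mem_singleton_iff]
      have : y ≤ lt.sum := List.single_le_sum (fun x _ => Nat.zero_le x) y h
      omega

end Stmt7Aux

/-- Theorem 9: characterization of the children of P in G([S]).
H is a child of P (i.e. H ∈ [S] and msg(P) = (msg(H) ∖ {M(H)}) ∪ {M(H) − m},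
with M(H) = sSup (msg H)) iff H = ⟨({n₁,…,n_e}∖{n_k}) ∪ {n_k + n₁}⟩ for some
k ∈ {2,…,e} with n_k + n₁ > n_e and n_k + n₁ ∉ ⟨{n₁,…,n_e}∖{n_k}⟩; moreover,
for such k the displayed set is the minimal system of generators of that child. -/

theorem stmt7 (m e : ℕ) (h2 : 2 ≤ e) (hem : e ≤ m) (S : Set ℕ) (hS : S ∈ Cset m e)
    (P : Set ℕ) (hP : P ∈ classOf m e S)
    (n : Fin e → ℕ) (hmono : StrictMono n) (hmsg : msg P = Set.range n)
    (H : Set ℕ) (hH : IsNumericalSemigroup H) :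
    ((H ∈ classOf m e S ∧
        msg P = (msg H \ {sSup (msg H)}) ∪ {sSup (msg H) - m}) ↔
      (∃ k : Fin e, k.val ≠ 0 ∧
        n k + n ⟨0, by omega⟩ > n ⟨e - 1, by omega⟩ ∧
        n k + n ⟨0, by omega⟩ ∉ genSet (Set.range n \ {n k}) ∧
        H = genSet ((Set.range n \ {n k}) ∪ {n k + n ⟨0, by omega⟩}))) ∧
    (∀ k : Fin e, k.val ≠ 0 →
        n k + n ⟨0, by omega⟩ > n ⟨e - 1, by omega⟩ →
        n k + n ⟨0, by omega⟩ ∉ genSet (Set.range n \ {n k}) →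
        msg (genSet ((Set.range n \ {n k}) ∪ {n k + n ⟨0, by omega⟩})) =
          (Set.range n \ {n k}) ∪ {n k + n ⟨0, by omega⟩}) := by
  classical
  obtain ⟨⟨hPns, hPm, hPe⟩, hphiP⟩ := hP
  have h0e : 0 < e := by omega
  have he1 : e - 1 < e := by omega
  have hm2 : 2 ≤ m := by omega
  have hninj : Function.Injective n := hmono.injective
  have hrfin : (Set.range n).Finite := Set.finite_range n
  -- basic facts about P
  have hPinf : P.Infinite := by
    have := hPns.2.2.infinite_compl; rwa [compl_compl] at this
  have hPd : (P \ {0}).Nonempty := (hPinf.diff (Set.finite_singleton 0)).nonempty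
  have hmP : m ∈ P \ {0} := by rw [← hPm]; exact Nat.sInf_mem hPd
  have hlePd : ∀ x ∈ P \ {0}, m ≤ x := fun x hx => by rw [← hPm]; exact Nat.sInf_le hx
  have hmmsg : m ∈ msg P := by
    refine ⟨hmP, ?_⟩
    intro hsum
    rw [Set.mem_add] at hsum
    obtain ⟨a, ha, b, hb, hab⟩ := hsum
    have := hlePd a ha; have := hlePd b hb
    omega
  have hnmem : ∀ j, n j ∈ msg P := fun j => by rw [hmsg]; exact Set.mem_range_self _
  have hnm : ∀ j, m ≤ n j := fun j => hlePd _ (hnmem j).1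
  have hn0 : n ⟨0, h0e⟩ = m := by
    have hmr : m ∈ Set.range n := by rw [← hmsg]; exact hmmsg
    obtain ⟨j, hj⟩ := hmr
    have h1 : n ⟨0, h0e⟩ ≤ n j := hmono.monotone (by simp [Fin.le_def])
    have h2 : m ≤ n ⟨0, h0e⟩ := hnm _
    omega
  have hnle : ∀ j : Fin e, n j ≤ n ⟨e - 1, he1⟩ := fun j => by
    apply hmono.monotone
    have := j.isLt
    simp only [Fin.le_def]
    omega
  have hPefin : (msg P).Finite := by rw [hmsg]; exact hrfin
  have hPcard : (msg P).ncard = e := hPe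
  -- Part 2
  have part2 : ∀ k : Fin e, k.val ≠ 0 →
      n k + n ⟨0, h0e⟩ > n ⟨e - 1, he1⟩ →
      n k + n ⟨0, h0e⟩ ∉ genSet (Set.range n \ {n k}) →
      msg (genSet ((Set.range n \ {n k}) ∪ {n k + n ⟨0, h0e⟩})) =
        (Set.range n \ {n k}) ∪ {n k + n ⟨0, h0e⟩} := by
    intro k hk hbig hnot
    apply Stmt7Aux.msg_genSet
    · rintro (⟨⟨j, hj⟩, -⟩ | h)
      · have := hnm j; omega
      · simp only [Set.mem_singleton_iff] at h
        have := hnm k; omega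
    · rintro b (⟨⟨j, hj⟩, hjk⟩ | hb)
      · subst hj
        intro hgen
        obtain ⟨l, hl, hsum⟩ := Stmt7Aux.exists_list hgen
        have hall : ∀ z ∈ l, z ∈ msg P \ {n j} := by
          intro z hz
          obtain ⟨hz1, hz2⟩ := hl z hz
          rcases hz1 with ⟨hzr, -⟩ | hzy
          · exact ⟨by rw [hmsg]; exact hzr, hz2⟩
          · exfalso
            simp only [Set.mem_singleton_iff] at hzy
            have h1 : z ≤ l.sum := List.single_le_sum (fun x _ => Nat.zero_le x) z hz
            have h2 := hnle j
            omega
        have hmem := Stmt7Aux.list_mem_genSet hall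
        rw [hsum] at hmem
        exact Stmt7Aux.msg_not_in_rest hPns (hnmem j) hmem
      · simp only [Set.mem_singleton_iff] at hb
        subst hb
        intro hgen
        apply hnot
        refine Stmt7Aux.genSet_mono ?_ hgen
        rintro z ⟨hz1, hz2⟩
        rcases hz1 with h | h
        · exact h
        · exact absurd h hz2
  refine ⟨⟨?_, ?_⟩, fun k hk hbig hnot => part2 k hk hbig hnot⟩
  · -- forward direction
    rintro ⟨⟨⟨hHns, hHm, hHe⟩, hphiH⟩, hcond⟩
    have hHinf : H.Infinite := by
      have := hHns.2.2.infinite_compl; rwa [compl_compl] at this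
    have hHd : (H \ {0}).Nonempty := (hHinf.diff (Set.finite_singleton 0)).nonempty
    have hmH : m ∈ H \ {0} := by rw [← hHm]; exact Nat.sInf_mem hHd
    have hleH : ∀ x ∈ H \ {0}, m ≤ x := fun x hx => by rw [← hHm]; exact Nat.sInf_le hx
    have hmmsgH : m ∈ msg H := by
      refine ⟨hmH, ?_⟩
      intro hsum
      rw [Set.mem_add] at hsum
      obtain ⟨a, ha, b, hb, hab⟩ := hsum
      have := hleH a ha; have := hleH b hb
      omega
    have hfinH : (msg H).Finite := by
      by_contra h
      have h1 : (msg H).ncard = 0 := Set.Infinite.ncard h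
      rw [edim] at hHe; omega
    have hneH : (msg H).Nonempty := ⟨m, hmmsgH⟩
    have hHcard : (msg H).ncard = e := hHe
    set M := sSup (msg H) with hM
    have hMmem : M ∈ msg H := Nat.sSup_mem hneH hfinH.bddAbove
    have hleM : ∀ x ∈ msg H, x ≤ M := fun x hx => le_csSup hfinH.bddAbove hx
    have hmle : ∀ x ∈ msg H, m ≤ x := fun x hx => hleH x hx.1
    have hMm : m < M := by
      rcases lt_or_eq_of_le (hmle M hMmem) with h | h
      · exact h
      · exfalso
        have hsing : msg H = {m} := by
          apply subset_antisymm
          · intro x hx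
            have := hleM x hx; have := hmle x hx
            simp only [Set.mem_singleton_iff]; omega
          · simp [hmmsgH]
        rw [edim, hsing, Set.ncard_singleton] at hHe
        omega
    have hMP : M - m ∈ msg P := by
      rw [hcond]; exact Set.mem_union_right _ rfl
    rw [hmsg] at hMP
    obtain ⟨k, hkM⟩ := hMP
    have hkD : n k ∉ msg H \ {M} := by
      intro hin
      have habs : msg P = msg H \ {M} := by
        rw [hcond, ← hkM]
        exact Set.union_eq_self_of_subset_right (Set.singleton_subset_iff.mpr hin)
      have h1 : (msg H \ {M}).ncard = e - 1 := by
        rw [Set.ncard_diff_singleton_of_mem hMmem, hHcard]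
      have h3 : (msg P).ncard = e := hPcard
      rw [habs, h1] at h3
      omega
    have hk0 : k.val ≠ 0 := by
      intro h
      apply hkD
      have hke : k = ⟨0, h0e⟩ := Fin.ext h
      rw [hke, hn0]
      exact ⟨hmmsgH, by simp only [Set.mem_singleton_iff]; omega⟩
    have hMk : M = n k + m := by rw [hkM]; omega
    have hDeq : msg H \ {M} = msg P \ {n k} := by
      rw [hcond, ← hkM]
      ext x
      simp only [Set.mem_diff, Set.mem_union, Set.mem_singleton_iff]
      constructor
      · intro hx
        exact ⟨Or.inl hx, fun h => hkD (h ▸ hx)⟩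
      · rintro ⟨h | h, hne⟩
        · exact h
        · exact absurd h hne
    have hmsgHeq : msg H = (msg P \ {n k}) ∪ {M} := by
      rw [← hDeq]
      exact (Set.diff_union_of_subset (Set.singleton_subset_iff.mpr hMmem)).symm
    have hbig : n ⟨e - 1, he1⟩ < n k + m := by
      by_cases hke : k.val = e - 1
      · have heq : n ⟨e - 1, he1⟩ = n k := congrArg n (Fin.ext hke.symm)
        rw [heq]; omega
      · have hne : n ⟨e - 1, he1⟩ ≠ n k := fun h => hke (congrArg Fin.val (hninj h)).symm
        have hmem : n ⟨e - 1, he1⟩ ∈ msg H \ {M} := by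
          rw [hDeq]
          exact ⟨hnmem _, by simpa using hne⟩
        have h1 : n ⟨e - 1, he1⟩ ≤ M := hleM _ hmem.1
        have h2 : n ⟨e - 1, he1⟩ ≠ M := by simpa using hmem.2
        omega
    have hnotg : n k + m ∉ genSet (Set.range n \ {n k}) := by
      have heq : Set.range n \ {n k} = msg H \ {M} := by rw [hDeq, hmsg]
      rw [heq, ← hMk]
      exact Stmt7Aux.msg_not_in_rest hHns hMmem
    have hHeq : H = genSet ((Set.range n \ {n k}) ∪ {n k + m}) := by
      have heq : (Set.range n \ {n k}) ∪ {n k + m} = msg H := by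
        rw [hmsgHeq, hMk, hmsg]
      rw [heq, Stmt7Aux.genSet_msg_eq hHns]
    exact ⟨k, hk0, by rw [hn0]; exact hbig, by rw [hn0]; exact hnotg, by rw [hn0]; exact hHeq⟩
  · -- backward direction
    rintro ⟨k, hk0, hbig, hnot, hHeq⟩
    have hbig' : n k + n ⟨0, h0e⟩ > n ⟨e - 1, he1⟩ := hbig
    have hnot' : n k + n ⟨0, h0e⟩ ∉ genSet (Set.range n \ {n k}) := hnot
    have hmsgH0 : msg H = (Set.range n \ {n k}) ∪ {n k + n ⟨0, h0e⟩} := by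
      rw [hHeq]; exact part2 k hk0 hbig' hnot'
    have hHeq' : H = genSet ((Set.range n \ {n k}) ∪ {n k + n ⟨0, h0e⟩}) := hHeq
    rw [hn0] at hmsgH0 hHeq'
    have hbigm : n ⟨e - 1, he1⟩ < n k + m := by rw [← hn0]; exact hbig'
    have hnotm : n k + m ∉ genSet (Set.range n \ {n k}) := by rw [← hn0]; exact hnot'
    have hkm0 : (⟨0, h0e⟩ : Fin e) ≠ k := fun h => hk0 (congrArg Fin.val h).symm
    have hne0k : m ≠ n k := by
      rw [← hn0]; intro h; exact hkm0 (hninj h)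
    have hmB : m ∈ (Set.range n \ {n k}) ∪ {n k + m} :=
      Set.mem_union_left _ ⟨by rw [← hn0]; exact Set.mem_range_self _, hne0k⟩
    have hBge : ∀ b ∈ (Set.range n \ {n k}) ∪ {n k + m}, m ≤ b := by
      rintro b (⟨⟨j, hj⟩, -⟩ | hb)
      · have := hnm j; omega
      · simp only [Set.mem_singleton_iff] at hb
        have := hnm k; omega
    have hkrange : n k + m ∉ Set.range n := by
      rintro ⟨j, hj⟩
      have := hnle j; have := hnm ⟨0, h0e⟩; omega
    have hmemH : m ∈ H \ {0} := by
      refine ⟨by rw [hHeq']; exact Stmt7Aux.mem_genSet hmB, ?_⟩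
      simp only [Set.mem_singleton_iff]; omega
    have hmultH : mult H = m := by
      apply le_antisymm
      · exact Nat.sInf_le hmemH
      · have hne : (H \ {0}).Nonempty := ⟨m, hmemH⟩
        have hs := Nat.sInf_mem hne
        have hmem : sInf (H \ {0}) ∈ genSet ((Set.range n \ {n k}) ∪ {n k + m}) := by
          rw [← hHeq']; exact hs.1
        exact Stmt7Aux.genSet_pos_le hBge hmem
          (fun h0 => hs.2 (Set.mem_singleton_iff.mpr h0))
    have hncard : ((Set.range n \ {n k}) ∪ {n k + m}).ncard = e := by
      rw [Set.union_singleton,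
        Set.ncard_insert_of_notMem (fun h => hkrange h.1) hrfin.diff]
      have h1 : (Set.range n \ {n k}).ncard = e - 1 := by
        rw [← hmsg, Set.ncard_diff_singleton_of_mem (hnmem k), hPcard]
      rw [h1]; omega
    have hedimH : edim H = e := by rw [edim, hmsgH0]; exact hncard
    have himg : (fun x => m + x % m) '' ((Set.range n \ {n k}) ∪ {n k + m}) =
        (fun x => m + x % m) '' Set.range n := by
      apply subset_antisymm
      · rintro _ ⟨x, hx, rfl⟩
        rcases hx with ⟨hx1, -⟩ | hx2
        · exact ⟨x, hx1, rfl⟩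
        · simp only [Set.mem_singleton_iff] at hx2
          subst hx2
          exact ⟨n k, Set.mem_range_self _, by simp [Nat.add_mod_right]⟩
      · rintro _ ⟨x, ⟨j, rfl⟩, rfl⟩
        by_cases h : n j = n k
        · refine ⟨n k + m, Set.mem_union_right _ rfl, ?_⟩
          simp [Nat.add_mod_right, h]
        · exact ⟨n j, Set.mem_union_left _ ⟨Set.mem_range_self _, h⟩, rfl⟩
    have hphiHP : phi H = phi P := by
      rw [phi, phi, hmultH, hPm, hmsgH0, hmsg, himg]
    have hclass : H ∈ classOf m e S := ⟨⟨hH, hmultH, hedimH⟩, hphiHP.trans hphiP⟩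
    have hsSup : sSup (msg H) = n k + m := by
      rw [hmsgH0]
      apply le_antisymm
      · refine csSup_le ⟨n k + m, Set.mem_union_right _ rfl⟩ ?_
        rintro b (⟨⟨j, hj⟩, -⟩ | hb)
        · have := hnle j; have := hnm ⟨0, h0e⟩; omega
        · simp only [Set.mem_singleton_iff] at hb; omega
      · exact le_csSup (Set.Finite.bddAbove (hrfin.diff.union (Set.finite_singleton _)))
          (Set.mem_union_right _ rfl)
    refine ⟨hclass, ?_⟩
    rw [hsSup, hmsgH0]
    have hd : ((Set.range n \ {n k}) ∪ {n k + m}) \ {n k + m} = Set.range n \ {n k} := by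
      ext x
      simp only [Set.mem_diff, Set.mem_union, Set.mem_singleton_iff]
      constructor
      · rintro ⟨h | h, hne⟩
        · exact h
        · exact absurd h hne
      · rintro ⟨hx, hne⟩
        exact ⟨Or.inl ⟨hx, hne⟩, fun h => hkrange (h ▸ hx)⟩
    rw [hd, Nat.add_sub_cancel, hmsg]
    exact (Set.diff_union_of_subset (Set.singleton_subset_iff.mpr (Set.mem_range_self k))).symm
end

section
/- Let P be a numerical semigroup with msg(P) = {n₁ < n₂ < ⋯ < n_e}, let k ∈ {2, …, e} be such that n_k + n₁ > n_e and n_k + n₁ ∉ ⟨{n₁,…,n_e} ∖ {n_k}⟩, and let H = ⟨({n₁,…,n_e} ∖ {n_k}) ∪ {n_k + n₁}⟩. Then H ⊊ P, F(P) ≤ F(H), and g(P) < g(H). -/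
open scoped Pointwise

/-- Every element of a set closed under the msg-decomposition lies in the
closure of its msg. -/
lemma mem_closure_msg (S : Set ℕ) : ∀ p ∈ S, p ∈ AddSubmonoid.closure (msg S) := by
  intro p
  induction p using Nat.strong_induction_on with
  | _ p ih =>
    intro hp
    rcases Nat.eq_zero_or_pos p with h0 | hpos
    · subst h0; exact zero_mem _
    by_cases hm : p ∈ msg S
    · exact AddSubmonoid.subset_closure hm
    · have hps : p ∈ (S \ {0}) + (S \ {0}) := by
        by_contra hc
        exact hm ⟨⟨hp, by simpa using hpos.ne'⟩, hc⟩
      rcases Set.mem_add.mp hps with ⟨a, ha, b, hb, hab⟩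
      have ha0 : a ≠ 0 := by simpa using ha.2
      have hb0 : b ≠ 0 := by simpa using hb.2
      have h1 := ih a (by omega) ha.1
      have h2 := ih b (by omega) hb.1
      have : a + b ∈ AddSubmonoid.closure (msg S) := add_mem h1 h2
      rwa [hab] at this

/-- Proposition 12: for H = ⟨({n₁,…,n_e}∖{n_k}) ∪ {n_k + n₁}⟩
with k ∈ {2,…,e}, n_k + n₁ > n_e and n_k + n₁ ∉ ⟨{n₁,…,n_e}∖{n_k}⟩, one has
H ⊊ P, F(P) ≤ F(H) and g(P) < g(H). -/
theorem stmt9 (e : ℕ) (h2 : 2 ≤ e) (P : Set ℕ) (hP : IsNumericalSemigroup P)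
    (n : Fin e → ℕ) (hmono : StrictMono n) (hmsg : msg P = Set.range n)
    (k : Fin e) (hk : k.val ≠ 0)
    (hgt : n k + n ⟨0, by omega⟩ > n ⟨e - 1, by omega⟩)
    (hnot : n k + n ⟨0, by omega⟩ ∉ genSet (Set.range n \ {n k})) :
    genSet ((Set.range n \ {n k}) ∪ {n k + n ⟨0, by omega⟩}) ⊂ P ∧
    Frob P ≤ Frob (genSet ((Set.range n \ {n k}) ∪ {n k + n ⟨0, by omega⟩})) ∧
    genus P < genus (genSet ((Set.range n \ {n k}) ∪ {n k + n ⟨0, by omega⟩})) := by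
  obtain ⟨h0P, haddP, hfinP⟩ := hP
  set z : Fin e := ⟨0, by omega⟩ with hz
  set n0 : ℕ := n z with hn0
  set s : ℕ := n k + n0 with hs
  set A : Set ℕ := Set.range n \ {n k} with hA
  set Hm : AddSubmonoid ℕ := AddSubmonoid.closure (A ∪ {s}) with hHm
  have hH : genSet (A ∪ {s}) = (Hm : Set ℕ) := rfl
  -- basic facts
  have hrange : Set.range n ⊆ P \ {0} := by
    rw [← hmsg]; intro x hx; exact hx.1
  have hnP : ∀ i, n i ∈ P := fun i => (hrange ⟨i, rfl⟩).1
  have hnne : ∀ i, n i ≠ 0 := fun i => by simpa using (hrange ⟨i, rfl⟩).2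
  have hzk : z ≠ k := by
    intro h; apply hk; rw [← h]
  have hzklt : z < k := by
    rw [Fin.lt_def]
    have : z.val = 0 := rfl
    omega
  have hn0lt : n0 < n k := hmono hzklt
  have hn0pos : 0 < n0 := Nat.pos_of_ne_zero (hnne z)
  have hn0A : n0 ∈ A := by
    refine ⟨⟨z, rfl⟩, ?_⟩
    simp only [Set.mem_singleton_iff]
    intro h
    exact hzk (hmono.injective h)
  have hn0H : n0 ∈ Hm := AddSubmonoid.subset_closure (Or.inl hn0A)
  have hsH : s ∈ Hm := AddSubmonoid.subset_closure (Or.inr rfl)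
  -- H ⊆ P
  have hHsub : (Hm : Set ℕ) ⊆ P := by
    let Pm : AddSubmonoid ℕ :=
      { carrier := P, zero_mem' := h0P, add_mem' := fun ha hb => haddP _ ha _ hb }
    have hle : Hm ≤ Pm := by
      rw [hHm]
      apply AddSubmonoid.closure_le.mpr
      rintro x (hx | hx)
      · obtain ⟨⟨i, rfl⟩, -⟩ := hx
        exact hnP i
      · rw [Set.mem_singleton_iff] at hx
        subst hx
        exact haddP _ (hnP k) _ (hnP z)
    exact hle
  -- n k ∉ H
  have hnkH : n k ∉ Hm := by
    intro hmem
    rw [hHm, AddSubmonoid.closure_union, AddSubmonoid.mem_sup] at hmem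
    obtain ⟨y, hy, w, hw, hyw⟩ := hmem
    obtain ⟨c, rfl⟩ := AddSubmonoid.mem_closure_singleton.mp hw
    rcases Nat.eq_zero_or_pos c with hc | hc
    · subst hc
      simp only [zero_smul, add_zero] at hyw
      subst hyw
      exact hnot (by
        show n k + n0 ∈ genSet A
        exact add_mem hy (AddSubmonoid.subset_closure hn0A))
    · have hle : s ≤ c • s := by
        rw [smul_eq_mul]
        exact Nat.le_mul_of_pos_left s hc
      omega
  -- key: for every p ∈ P there is a ≤ p with p + a * n0 ∈ H
  have hPclos : ∀ p ∈ P, p ∈ AddSubmonoid.closure (Set.range n) := by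
    intro p hp
    have := mem_closure_msg P p hp
    rwa [hmsg] at this
  have key : ∀ p ∈ AddSubmonoid.closure (Set.range n), ∃ a, a ≤ p ∧ p + a * n0 ∈ Hm := by
    intro p hcl
    induction hcl using AddSubmonoid.closure_induction with
    | mem x hx =>
      obtain ⟨i, rfl⟩ := hx
      by_cases hik : i = k
      · subst hik
        refine ⟨1, by omega, ?_⟩
        simpa using hsH
      · refine ⟨0, by omega, ?_⟩
        simp only [Nat.zero_mul, Nat.add_zero]
        refine AddSubmonoid.subset_closure (Or.inl ⟨⟨i, rfl⟩, ?_⟩)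
        simp only [Set.mem_singleton_iff]
        exact fun h => hik (hmono.injective h)
    | zero => exact ⟨0, le_rfl, by simpa using (zero_mem Hm)⟩
    | add x y hx hy ihx ihy =>
      obtain ⟨a, ha, haH⟩ := ihx
      obtain ⟨b, hb, hbH⟩ := ihy
      refine ⟨a + b, by omega, ?_⟩
      have : x + y + (a + b) * n0 = (x + a * n0) + (y + b * n0) := by ring
      rw [this]
      exact add_mem haH hbH
  have key2 : ∀ p ∈ P, ∀ t, p ≤ t → p + t * n0 ∈ Hm := by
    intro p hp t ht
    obtain ⟨a, ha, haH⟩ := key p (hPclos p hp)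
    have heq : p + t * n0 = (p + a * n0) + (t - a) * n0 := by
      have : t - a + a = t := by omega
      calc p + t * n0 = p + (t - a + a) * n0 := by rw [this]
        _ = (p + a * n0) + (t - a) * n0 := by ring
    rw [heq]
    refine add_mem haH ?_
    have := AddSubmonoid.nsmul_mem Hm hn0H (t - a)
    simpa [nsmul_eq_mul] using this
  -- all m > Frob P lie in P
  have hbig : ∀ m, Frob P < m → m ∈ P := by
    intro m hm
    by_contra hmP
    have : m ≤ Frob P := le_csSup hfinP.bddAbove hmP
    omega
  -- complement of H is finite
  set c : ℕ := Frob P + 1 with hc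
  set B : ℕ := c + n0 * (c + n0 + 1) with hB
  have hHcompl : (Hm : Set ℕ)ᶜ ⊆ Set.Iio B := by
    intro N hN
    simp only [Set.mem_Iio]
    by_contra hNB
    push_neg at hNB
    apply hN
    set r : ℕ := (N - c) % n0 with hr
    set q : ℕ := (N - c) / n0 with hq
    have hrlt : r < n0 := Nat.mod_lt _ hn0pos
    have hdm : n0 * q + r = N - c := Nat.div_add_mod _ _
    have hNc : c ≤ N := by
      have : c ≤ B := by omega
      omega
    have hdm2 : q * n0 = n0 * q := Nat.mul_comm _ _
    have hNeq : N = (c + r) + q * n0 := by omega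
    have hpP : c + r ∈ P := hbig _ (by omega)
    have hqge : c + r ≤ q := by
      have h1 : n0 * (c + n0 + 1) ≤ n0 * q + r := by omega
      have h2 : n0 * q + r < n0 * q + n0 := by omega
      have h3 : n0 * (c + n0 + 1) < n0 * (q + 1) := by
        calc n0 * (c + n0 + 1) ≤ n0 * q + r := h1
          _ < n0 * (q + 1) := by rw [Nat.mul_add, Nat.mul_one]; omega
      have h4 : c + n0 + 1 < q + 1 := Nat.lt_of_mul_lt_mul_left h3
      omega
    have := key2 _ hpP q hqge
    rw [hNeq]
    exact this
  have hHfin : (Hm : Set ℕ)ᶜ.Finite := (Set.finite_Iio B).subset hHcompl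
  -- P complement nonempty
  have h1P : (1 : ℕ) ∉ P := by
    intro h1
    have hall : ∀ m : ℕ, m ∈ P := by
      intro m
      induction m with
      | zero => exact h0P
      | succ m ih => exact haddP m ih 1 h1
    have h1msg : (1 : ℕ) ∈ msg P := by
      refine ⟨⟨h1, by simp⟩, ?_⟩
      intro hcon
      rcases Set.mem_add.mp hcon with ⟨a, ha, b, hb, hab⟩
      have ha0 : a ≠ 0 := by simpa using ha.2
      have hb0 : b ≠ 0 := by simpa using hb.2
      omega
    rw [hmsg] at h1msg
    obtain ⟨i, hi⟩ := h1msg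
    have hiz : i = z := by
      by_contra hiz
      have hzval : z.val = 0 := rfl
      have hival : i.val ≠ 0 := fun h => hiz (Fin.ext (h.trans hzval.symm))
      have : z < i := by
        rw [Fin.lt_def]
        omega
      have := hmono this
      have := Nat.pos_of_ne_zero (hnne z)
      omega
    subst hiz
    -- n0 = 1, so n k ≥ 2 and n k = 1 + (n k - 1) with both in P \ {0}
    have hn01 : n0 = 1 := hi
    have hnk2 : 2 ≤ n k := by omega
    have hnkmsg : n k ∈ msg P := by rw [hmsg]; exact ⟨k, rfl⟩
    apply hnkmsg.2
    refine Set.mem_add.mpr ⟨1, ⟨h1, by simp⟩, n k - 1, ⟨hall _, by simp; omega⟩, by omega⟩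
  have hPcne : Pᶜ.Nonempty := ⟨1, h1P⟩
  have hcompl : Pᶜ ⊆ (Hm : Set ℕ)ᶜ := Set.compl_subset_compl.mpr hHsub
  refine ⟨?_, ?_, ?_⟩
  · rw [hH]
    exact (Set.ssubset_iff_of_subset hHsub).mpr ⟨n k, hnP k, hnkH⟩
  · rw [hH]
    exact csSup_le_csSup hHfin.bddAbove hPcne hcompl
  · rw [hH]
    apply Set.ncard_lt_ncard _ hHfin
    exact ⟨hcompl, fun hsub => (hsub (fun h => hnkH h : n k ∈ (Hm : Set ℕ)ᶜ)) (hnP k)⟩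
end

section
/- Let n₁, …, n_e and i be positive integers. Set C(2) = {(x₁,…,x_e) ∈ ℕ^e : n₂x₂ + ⋯ + n_e x_e = n₁x₁ + i·1} and C(3) = {(x₁,…,x_e,x_{e+1}) ∈ ℕ^{e+1} : n₂x₂ + ⋯ + n_e x_e = n₁x₁ + i·x_{e+1}}. Suppose A = {α₁,…,α_t} is a generating set of the additive monoid C(3), where α₁,…,α_d are exactly the elements of A whose last coordinate is 0 and α_{d+1},…,α_q are exactly the elements of A whose last coordinate is 1. Then C(2) = {ᾱ_{d+1},…,ᾱ_q} + ⟨ᾱ₁,…,ᾱ_d⟩, where ᾱ_j ∈ ℕ^e is obtained from α_j by deleting the last coordinate and ⟨ᾱ₁,…,ᾱ_d⟩ is the additive submonoid of ℕ^e generated by ᾱ₁,…,ᾱ_d. -/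
open scoped Pointwise

/-- Lemma 25: if A = {α₁,…,α_t} generates the monoid C(3)
(nonnegative solutions of n₂x₂+⋯+n_e x_e = n₁x₁ + i·x_{e+1}), with
α₁,…,α_d exactly the elements with last coordinate 0 and α_{d+1},…,α_q exactly
those with last coordinate 1, then
C(2) = {ᾱ_{d+1},…,ᾱ_q} + ⟨ᾱ₁,…,ᾱ_d⟩, where ᾱ deletes the last coordinate.
Tuples of ℕ^{e+1} are encoded as (x₁, (x₂,…,x_e), x_{e+1}) : ℕ × (Fin r → ℕ) × ℕ
with r = e − 1 and n₂,…,n_e encoded as c : Fin r → ℕ. -/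
theorem stmt16 (r : ℕ) (n1 i : ℕ) (c : Fin r → ℕ)
    (hn1 : 0 < n1) (hc : ∀ j, 0 < c j) (hi : 0 < i)
    (t d q : ℕ) (hdq : d ≤ q) (hqt : q ≤ t)
    (α : Fin t → ℕ × (Fin r → ℕ) × ℕ)
    (hgen : (AddSubmonoid.closure (Set.range α) : Set (ℕ × (Fin r → ℕ) × ℕ)) =
      {x | ∑ j, c j * x.2.1 j = n1 * x.1 + i * x.2.2})
    (h0 : ∀ k : Fin t, (α k).2.2 = 0 ↔ k.val < d)
    (h1 : ∀ k : Fin t, (α k).2.2 = 1 ↔ (d ≤ k.val ∧ k.val < q)) :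
    {x : ℕ × (Fin r → ℕ) | ∑ j, c j * x.2 j = n1 * x.1 + i} =
      ((fun x : ℕ × (Fin r → ℕ) × ℕ => (x.1, x.2.1)) ''
          (α '' {k : Fin t | d ≤ k.val ∧ k.val < q})) +
        (AddSubmonoid.closure ((fun x : ℕ × (Fin r → ℕ) × ℕ => (x.1, x.2.1)) ''
          (α '' {k : Fin t | k.val < d})) : Set (ℕ × (Fin r → ℕ))) := by
  classical
  set M : AddSubmonoid (ℕ × (Fin r → ℕ)) :=
    AddSubmonoid.closure ((fun x : ℕ × (Fin r → ℕ) × ℕ => (x.1, x.2.1)) ''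
      (α '' {k : Fin t | k.val < d})) with hM
  set B : Set (ℕ × (Fin r → ℕ)) :=
    (fun x : ℕ × (Fin r → ℕ) × ℕ => (x.1, x.2.1)) ''
      (α '' {k : Fin t | d ≤ k.val ∧ k.val < q}) with hB
  ext p
  constructor
  · intro hp
    have hmem : ((p.1, p.2, 1) : ℕ × (Fin r → ℕ) × ℕ) ∈ AddSubmonoid.closure (Set.range α) := by
      have h2 : ((p.1, p.2, 1) : ℕ × (Fin r → ℕ) × ℕ) ∈
          ((AddSubmonoid.closure (Set.range α) : AddSubmonoid _) : Set (ℕ × (Fin r → ℕ) × ℕ)) := by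
        rw [hgen]
        simpa using hp
      exact h2
    have key : ∀ y : ℕ × (Fin r → ℕ) × ℕ, y ∈ AddSubmonoid.closure (Set.range α) →
        (y.2.2 = 0 → (y.1, y.2.1) ∈ M) ∧ (y.2.2 = 1 → (y.1, y.2.1) ∈ B + (M : Set (ℕ × (Fin r → ℕ)))) := by
      intro y hy
      induction hy using AddSubmonoid.closure_induction with
      | mem x hx =>
        obtain ⟨k, rfl⟩ := hx
        constructor
        · intro hk0
          exact AddSubmonoid.subset_closure ⟨α k, ⟨k, (h0 k).mp hk0, rfl⟩, rfl⟩
        · intro hk1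
          refine ⟨((α k).1, (α k).2.1), ⟨α k, ⟨k, (h1 k).mp hk1, rfl⟩, rfl⟩, 0, M.zero_mem, ?_⟩
          simp
      | zero =>
        constructor
        · intro _; exact M.zero_mem
        · intro h; simp at h
      | add x y hx hy ihx ihy =>
        have hxy : (x + y).2.2 = x.2.2 + y.2.2 := rfl
        constructor
        · intro h0'
          rw [hxy] at h0'
          have hx0 : x.2.2 = 0 := Nat.eq_zero_of_add_eq_zero_right h0'
          have hy0 : y.2.2 = 0 := Nat.eq_zero_of_add_eq_zero_left h0'
          exact M.add_mem (ihx.1 hx0) (ihy.1 hy0)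
        · intro h1'
          rw [hxy] at h1'
          rcases Nat.add_eq_one_iff.mp h1' with ⟨hx0, hy1⟩ | ⟨hx1, hy0⟩
          · obtain ⟨b, hb, m, hm, hbm⟩ := ihy.2 hy1
            refine ⟨b, hb, m + (x.1, x.2.1), M.add_mem hm (ihx.1 hx0), ?_⟩
            have : (x.1, x.2.1) + (y.1, y.2.1) = ((x+y).1, (x+y).2.1) := rfl
            rw [← this, ← hbm]; simp only [add_comm, add_left_comm, add_assoc]
          · obtain ⟨b, hb, m, hm, hbm⟩ := ihx.2 hx1
            refine ⟨b, hb, m + (y.1, y.2.1), M.add_mem hm (ihy.1 hy0), ?_⟩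
            have : (x.1, x.2.1) + (y.1, y.2.1) = ((x+y).1, (x+y).2.1) := rfl
            rw [← this, ← hbm]; simp only [add_comm, add_left_comm, add_assoc]
    exact (key _ hmem).2 rfl
  · rintro ⟨b, hb, m, hm, rfl⟩
    obtain ⟨x, ⟨k, hk, rfl⟩, rfl⟩ := hb
    have hk1 : (α k).2.2 = 1 := (h1 k).mpr hk
    have lift : ∀ m' : ℕ × (Fin r → ℕ), m' ∈ M →
        ∃ y : ℕ × (Fin r → ℕ) × ℕ, y ∈ AddSubmonoid.closure (Set.range α) ∧ y.2.2 = 0 ∧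
          (y.1, y.2.1) = m' := by
      intro m' hm'
      induction hm' using AddSubmonoid.closure_induction with
      | mem x hx =>
        obtain ⟨z, ⟨j, hj, rfl⟩, rfl⟩ := hx
        exact ⟨α j, AddSubmonoid.subset_closure ⟨j, rfl⟩, (h0 j).mpr hj, rfl⟩
      | zero => exact ⟨0, AddSubmonoid.zero_mem _, rfl, rfl⟩
      | add x y hx hy ihx ihy =>
        obtain ⟨y1, hy1, hy10, hy1e⟩ := ihx
        obtain ⟨y2, hy2, hy20, hy2e⟩ := ihy
        refine ⟨y1 + y2, AddSubmonoid.add_mem _ hy1 hy2, ?_, ?_⟩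
        · show y1.2.2 + y2.2.2 = 0
          rw [hy10, hy20]
        · show (y1.1 + y2.1, y1.2.1 + y2.2.1) = x + y
          rw [← hy1e, ← hy2e]; rfl
    obtain ⟨y, hy, hy0, hye⟩ := lift m hm
    have hsum : α k + y ∈ AddSubmonoid.closure (Set.range α) :=
      AddSubmonoid.add_mem _ (AddSubmonoid.subset_closure ⟨k, rfl⟩) hy
    have heq : α k + y ∈ ({x | ∑ j, c j * x.2.1 j = n1 * x.1 + i * x.2.2} :
        Set (ℕ × (Fin r → ℕ) × ℕ)) := by rw [← hgen]; exact hsum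
    simp only [Set.mem_setOf_eq] at heq ⊢
    have h22 : (α k + y).2.2 = 1 := by show (α k).2.2 + y.2.2 = 1; rw [hk1, hy0]
    rw [h22, mul_one] at heq
    have hproj : (((α k).1, (α k).2.1) + (y.1, y.2.1) : ℕ × (Fin r → ℕ)) =
        ((α k + y).1, (α k + y).2.1) := rfl
    rw [← hye, hproj]
    exact heq
end

section
/- Let n₁, …, n_e and i be positive integers with i < n₁. Set C(1) = {(x₂,…,x_e) ∈ ℕ^{e−1} : n₂x₂ + ⋯ + n_e x_e ≡ i (mod n₁)} and C(3) = {(x₁,…,x_e,x_{e+1}) ∈ ℕ^{e+1} : n₂x₂ + ⋯ + n_e x_e = n₁x₁ + i·x_{e+1}}. Suppose A = {α₁,…,α_t} generates the additive monoid C(3), with α_{d+1},…,α_q exactly the elements of A whose last coordinate equals 1. Then the set of minimal elements of C(1), with respect to the componentwise order on ℕ^{e−1}, coincides with the set of minimal elements of the finite set {(α_{k,2},…,α_{k,e}) : k ∈ {d+1,…,q}} obtained by deleting the first and last coordinates of α_{d+1},…,α_q. -/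
open scoped Pointwise

/-- Proposition 26: with i < n₁ and A = {α₁,…,α_t} a generating
set of C(3) whose elements with last coordinate 1 are exactly α_{d+1},…,α_q,
the minimal elements (componentwise order) of
C(1) = {(x₂,…,x_e) ∈ ℕ^{e−1} : n₂x₂+⋯+n_e x_e ≡ i (mod n₁)} coincide with the
minimal elements of {(α_{k,2},…,α_{k,e}) : d+1 ≤ k ≤ q} (first and last
coordinates deleted). Tuples of ℕ^{e+1} are encoded as
(x₁, (x₂,…,x_e), x_{e+1}) : ℕ × (Fin r → ℕ) × ℕ with r = e − 1 and
n₂,…,n_e encoded as c : Fin r → ℕ. -/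
theorem stmt17 (r : ℕ) (n1 i : ℕ) (c : Fin r → ℕ)
    (hn1 : 0 < n1) (hc : ∀ j, 0 < c j) (hi : 0 < i) (hin1 : i < n1)
    (t d q : ℕ) (hdq : d ≤ q) (hqt : q ≤ t)
    (α : Fin t → ℕ × (Fin r → ℕ) × ℕ)
    (hgen : (AddSubmonoid.closure (Set.range α) : Set (ℕ × (Fin r → ℕ) × ℕ)) =
      {x | ∑ j, c j * x.2.1 j = n1 * x.1 + i * x.2.2})
    (h1 : ∀ k : Fin t, (α k).2.2 = 1 ↔ (d ≤ k.val ∧ k.val < q)) :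
    minimalsOf {x : Fin r → ℕ | (∑ j, c j * x j) % n1 = i % n1} =
      minimalsOf ((fun x : ℕ × (Fin r → ℕ) × ℕ => x.2.1) ''
        (α '' {k : Fin t | d ≤ k.val ∧ k.val < q})) := by

  have key : ∀ z ∈ AddSubmonoid.closure (Set.range α), z.2.2 = 1 →
      ∃ k : Fin t, (d ≤ k.val ∧ k.val < q) ∧ (α k).2.1 ≤ z.2.1 := by
    intro z hz
    induction hz using AddSubmonoid.closure_induction with
    | mem y hy =>
      intro h1y
      obtain ⟨k, rfl⟩ := hy
      exact ⟨k, (h1 k).mp h1y, le_refl _⟩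
    | zero =>
      intro h
      simp at h
    | add a b ha hb iha ihb =>
      intro hab
      have : a.2.2 + b.2.2 = 1 := hab
      rcases Nat.add_eq_one_iff.mp this with ⟨ha2, hb2⟩ | ⟨ha2, hb2⟩
      · obtain ⟨k, hk, hle⟩ := ihb hb2
        exact ⟨k, hk, fun j => le_add_of_nonneg_of_le (Nat.zero_le _) (hle j)⟩
      · obtain ⟨k, hk, hle⟩ := iha ha2
        exact ⟨k, hk, fun j => le_add_of_le_of_nonneg (hle j) (Nat.zero_le _)⟩
  set C1 : Set (Fin r → ℕ) := {x | (∑ j, c j * x j) % n1 = i % n1} with hC1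
  set B : Set (Fin r → ℕ) := ((fun x : ℕ × (Fin r → ℕ) × ℕ => x.2.1) ''
      (α '' {k : Fin t | d ≤ k.val ∧ k.val < q})) with hB
  have hBC : B ⊆ C1 := by
    rintro b ⟨z, ⟨k, hk, rfl⟩, rfl⟩
    have hmem : α k ∈ AddSubmonoid.closure (Set.range α) :=
      AddSubmonoid.subset_closure (Set.mem_range_self k)
    have heq : ∑ j, c j * (α k).2.1 j = n1 * (α k).1 + i * (α k).2.2 := by
      have := hgen ▸ (SetLike.mem_coe.mpr hmem)
      exact this
    have h2 : (α k).2.2 = 1 := (h1 k).mpr hk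
    simp only [Set.mem_setOf_eq, hC1]
    rw [heq, h2, mul_one, Nat.mul_add_mod]
  have hdom : ∀ x ∈ C1, ∃ b ∈ B, b ≤ x := by
    intro x hx
    have hmod : (∑ j, c j * x j) % n1 = i % n1 := hx
    have heq : ∑ j, c j * x j = n1 * ((∑ j, c j * x j) / n1) + i := by
      conv_lhs => rw [← Nat.div_add_mod (∑ j, c j * x j) n1]
      rw [hmod, Nat.mod_eq_of_lt hin1]
    have hz : ((((∑ j, c j * x j) / n1), x, 1) : ℕ × (Fin r → ℕ) × ℕ) ∈
        AddSubmonoid.closure (Set.range α) := by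
      have : ((((∑ j, c j * x j) / n1), x, 1) : ℕ × (Fin r → ℕ) × ℕ) ∈
          {x : ℕ × (Fin r → ℕ) × ℕ | ∑ j, c j * x.2.1 j = n1 * x.1 + i * x.2.2} := by
        simp only [Set.mem_setOf_eq, mul_one]
        exact heq
      rw [← hgen] at this
      exact this
    obtain ⟨k, hk, hle⟩ := key _ hz rfl
    exact ⟨(α k).2.1, ⟨α k, ⟨k, hk, rfl⟩, rfl⟩, hle⟩
  ext x
  simp only [minimalsOf, Set.mem_setOf_eq]
  constructor
  · rintro ⟨hxC, hmin⟩
    obtain ⟨b, hbB, hbx⟩ := hdom x hxC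
    have hbx' : b = x := hmin b (hBC hbB) hbx
    refine ⟨hbx' ▸ hbB, ?_⟩
    intro y hyB hyx
    exact hmin y (hBC hyB) hyx
  · rintro ⟨hxB, hmin⟩
    refine ⟨hBC hxB, ?_⟩
    intro y hyC hyx
    obtain ⟨b, hbB, hby⟩ := hdom y hyC
    have hbx : b = x := hmin b hbB (hby.trans hyx)
    exact le_antisymm hyx (hbx ▸ hby)
end

section
/- Let 2 ≤ e ≤ m be integers and let T be a numerical semigroup with multiplicity m, embedding dimension e, and T ≠ ℕ. Then T ⊆ φ(T), and consequently F(φ(T)) ≤ F(T) and g(φ(T)) ≤ g(T); in particular, the minimum of the Frobenius number (respectively, of the genus) over all numerical semigroups with multiplicity m and embedding dimension e is attained at a packed numerical semigroup in C(m,e). -/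
open scoped Pointwise

section Aux

lemma genSet_add_mem {B : Set ℕ} {a b : ℕ} (ha : a ∈ genSet B) (hb : b ∈ genSet B) :
    a + b ∈ genSet B := AddSubmonoid.add_mem _ ha hb

lemma genSet_msg_eq (S : Set ℕ) (h0 : 0 ∈ S) (hadd : ∀ a ∈ S, ∀ b ∈ S, a + b ∈ S) :
    genSet (msg S) = S := by
  apply Set.Subset.antisymm
  · intro x hx
    have : AddSubmonoid.closure (msg S) ≤
        { carrier := S, add_mem' := fun {a b} ha hb => hadd a ha b hb, zero_mem' := h0 } :=
      AddSubmonoid.closure_le.2 (fun y hy => hy.1.1)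
    exact this hx
  · intro s hs
    induction s using Nat.strong_induction_on with
    | _ s ih =>
      rcases eq_or_ne s 0 with rfl | hs0
      · exact AddSubmonoid.zero_mem _
      by_cases hm : s ∈ msg S
      · exact AddSubmonoid.subset_closure hm
      · have hsum : s ∈ (S \ {0}) + (S \ {0}) := by
          by_contra h
          exact hm ⟨⟨hs, hs0⟩, h⟩
        rw [Set.mem_add] at hsum
        obtain ⟨a, ⟨haS, ha0⟩, b, ⟨hbS, hb0⟩, hab⟩ := hsum
        have ha0' : a ≠ 0 := ha0
        have hb0' : b ≠ 0 := hb0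
        have h1 : a < s := by omega
        have h2 : b < s := by omega
        have := genSet_add_mem (ih a h1 haS) (ih b h2 hbS)
        rwa [hab] at this

/-- Main structural lemma: phi maps L(m,e) into C(m,e) and contains T. -/
lemma phi_main_s18 (m e : ℕ) (hm : 2 ≤ m) (T : Set ℕ)
    (hNS : IsNumericalSemigroup T) (hmu : mult T = m) (hed : edim T = e) :
    T ⊆ phi T ∧ IsNumericalSemigroup (phi T) ∧ mult (phi T) = m ∧
    edim (phi T) = e ∧ IsPacked (phi T) := by
  obtain ⟨h0, hadd, hfin⟩ := hNS
  have hm0 : m ≠ 0 := by omega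
  -- T \ {0} nonempty and m is its minimum
  have hTne : (T \ {0}).Nonempty := by
    rcases Set.eq_empty_or_nonempty (T \ {0}) with h | h
    · exfalso
      have : mult T = 0 := by
        rw [mult, Nat.sInf_eq_zero]; exact Or.inr h
      omega
    · exact h
  have hmT : m ∈ T \ {0} := by
    have := Nat.sInf_mem hTne
    rwa [show sInf (T \ {0}) = m from hmu] at this
  have hmu' : sInf (T \ {0}) = m := hmu
  have hge : ∀ x ∈ T \ {0}, m ≤ x := fun x hx => by
    have := Nat.sInf_le hx
    rwa [hmu'] at this
  -- m is a minimal generator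
  have hmmsg : m ∈ msg T := by
    refine ⟨hmT, ?_⟩
    rw [Set.mem_add]
    rintro ⟨a, ha, b, hb, hab⟩
    have := hge a ha
    have := hge b hb
    omega
  -- multiples of m lie in T
  have hmul : ∀ k : ℕ, k * m ∈ T := by
    intro k
    induction k with
    | zero => simpa using h0
    | succ n ihn =>
      have := hadd (n * m) ihn m hmT.1
      simpa [Nat.succ_mul] using this
  set B : Set ℕ := (fun x => m + x % m) '' msg T with hB
  have hphi : phi T = genSet B := by
    rw [phi, hmu]
  have hmB : m ∈ B := ⟨m, hmmsg, by simp [Nat.mod_self]⟩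
  have hBIcc : ∀ b ∈ B, m ≤ b ∧ b ≤ 2 * m - 1 := by
    rintro b ⟨x, _, rfl⟩
    have : x % m < m := Nat.mod_lt _ (by omega)
    dsimp only
    omega
  -- all nonzero elements of genSet B are ≥ m
  have hphi_ge : ∀ s ∈ genSet B, s = 0 ∨ m ≤ s := by
    intro s hs
    induction hs using AddSubmonoid.closure_induction with
    | mem x hx => exact Or.inr (hBIcc x hx).1
    | zero => exact Or.inl rfl
    | add x y hx hy ihx ihy => rcases ihx with rfl | ihx <;> rcases ihy with rfl | ihy <;> omega
  -- decomposition of nonzero elements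
  have hdecomp : ∀ s ∈ genSet B, s = 0 ∨ ∃ b ∈ B, ∃ t ∈ genSet B, s = b + t := by
    intro s hs
    induction hs using AddSubmonoid.closure_induction with
    | mem x hx => exact Or.inr ⟨x, hx, 0, AddSubmonoid.zero_mem _, (add_zero x).symm⟩
    | zero => exact Or.inl rfl
    | add x y hx hy ihx ihy =>
      rcases ihx with rfl | ⟨b, hb, t, ht, rfl⟩
      · simpa using ihy
      · exact Or.inr ⟨b, hb, t + y, genSet_add_mem ht hy, by ring⟩
  -- msg T ⊆ genSet B
  have hmsg_sub : msg T ⊆ genSet B := by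
    intro x hx
    have hxm : m ≤ x := hge x hx.1
    have hk : 1 ≤ x / m := (Nat.one_le_div_iff (by omega)).2 hxm
    obtain ⟨j, hj⟩ : ∃ j, x / m = j + 1 := ⟨x / m - 1, by omega⟩
    have h1 : m * (x / m) + x % m = x := Nat.div_add_mod x m
    rw [hj, Nat.mul_add, Nat.mul_one] at h1
    have hx_eq : x = (m + x % m) + j * m := by
      rw [Nat.mul_comm] at h1; omega
    rw [hx_eq]
    refine genSet_add_mem (AddSubmonoid.subset_closure ⟨x, hx, rfl⟩) ?_
    have := AddSubmonoid.nsmul_mem (S := AddSubmonoid.closure B) (AddSubmonoid.subset_closure hmB) j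
    simpa [smul_eq_mul, genSet] using this
  -- T ⊆ phi T
  have hsub : T ⊆ phi T := by
    rw [hphi, ← genSet_msg_eq T h0 hadd]
    intro x hx
    exact (AddSubmonoid.closure_le.2 hmsg_sub) hx
  -- m ∈ genSet B
  have hmgen : m ∈ genSet B := AddSubmonoid.subset_closure hmB
  -- mult (phi T) = m
  have hmult : mult (phi T) = m := by
    rw [hphi, mult]
    apply le_antisymm
    · exact Nat.sInf_le ⟨hmgen, hm0⟩
    · refine le_csInf ⟨m, hmgen, hm0⟩ ?_
      rintro b ⟨hb, hb0⟩
      rcases hphi_ge b hb with rfl | h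
      · exact absurd rfl hb0
      · exact h
  -- msg (phi T) = B
  have hmsg_phi : msg (phi T) = B := by
    rw [hphi]
    apply Set.Subset.antisymm
    · rintro s ⟨⟨hs, hs0⟩, hnsum⟩
      rcases hdecomp s hs with rfl | ⟨b, hb, t, ht, rfl⟩
      · exact absurd rfl hs0
      rcases eq_or_ne t 0 with rfl | ht0
      · simpa using hb
      exfalso
      apply hnsum
      rw [Set.mem_add]
      refine ⟨b, ⟨AddSubmonoid.subset_closure hb, ?_⟩, t, ⟨ht, ht0⟩, rfl⟩
      have := (hBIcc b hb).1
      simp only [Set.mem_singleton_iff]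
      omega
    · intro b hb
      refine ⟨⟨AddSubmonoid.subset_closure hb, ?_⟩, ?_⟩
      · have := (hBIcc b hb).1
        simp only [Set.mem_singleton_iff]
        omega
      · rw [Set.mem_add]
        rintro ⟨u, ⟨hu, hu0⟩, v, ⟨hv, hv0⟩, huv⟩
        have h1 := (hphi_ge u hu).resolve_left hu0
        have h2 := (hphi_ge v hv).resolve_left hv0
        have := (hBIcc b hb).2
        omega
  -- injectivity of the residue map on msg T
  have hinj : Set.InjOn (fun x => m + x % m) (msg T) := by
    have key : ∀ x ∈ msg T, ∀ y ∈ msg T, x < y → x % m ≠ y % m := by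
      intro x hx y hy hlt heq
      have hdvd : m ∣ y - x := (Nat.modEq_iff_dvd' (le_of_lt hlt)).1 heq
      obtain ⟨k, hk⟩ := hdvd
      have hk0 : k ≠ 0 := by
        rintro rfl; omega
      have hy_eq : y = x + k * m := by rw [Nat.mul_comm] at hk; omega
      apply hy.2
      rw [Set.mem_add]
      refine ⟨x, hx.1, k * m, ⟨hmul k, ?_⟩, hy_eq.symm⟩
      simp only [Set.mem_singleton_iff]
      intro h
      rcases Nat.mul_eq_zero.1 h with h' | h' <;> omega
    intro x hx y hy hxy
    dsimp only at hxy
    rcases lt_trichotomy x y with h | h | h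
    · exact absurd (by omega : x % m = y % m) (key x hx y hy h)
    · exact h
    · exact absurd (by omega : y % m = x % m) (key y hy x hx h)
  have hedim : edim (phi T) = e := by
    rw [edim, hmsg_phi, hB, Set.ncard_image_of_injOn hinj, ← edim, hed]
  refine ⟨hsub, ⟨AddSubmonoid.zero_mem _, ?_, ?_⟩, hmult, hedim, ?_⟩
  · rw [hphi]; exact fun a ha b hb => genSet_add_mem ha hb
  · exact hfin.subset (Set.compl_subset_compl.2 hsub)
  · rw [IsPacked, hmult, hmsg_phi]
    intro b hb
    exact Set.mem_Icc.2 ⟨(hBIcc b hb).1, (hBIcc b hb).2⟩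

lemma Frob_le_of_subset {A C : Set ℕ} (h : A ⊆ C) (hA : Aᶜ.Finite) : Frob C ≤ Frob A := by
  rw [Frob, Frob]
  rcases Set.eq_empty_or_nonempty Cᶜ with hemp | hne
  · rw [hemp, csSup_empty]
    exact Nat.zero_le _
  · exact csSup_le_csSup hA.bddAbove hne (Set.compl_subset_compl.2 h)

end Aux

/-- for T ∈ L(m,e), T ≠ ℕ, one has T ⊆ φ(T), hence
F(φ(T)) ≤ F(T) and g(φ(T)) ≤ g(T); in particular the minimum of the Frobenius
number (resp. the genus) over L(m,e) is attained at a packed semigroup of C(m,e). -/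
theorem stmt18 (m e : ℕ) (h2 : 2 ≤ e) (hem : e ≤ m)
    (T : Set ℕ) (hT : T ∈ Lset m e) (hTne : T ≠ Set.univ) :
    T ⊆ phi T ∧ Frob (phi T) ≤ Frob T ∧ genus (phi T) ≤ genus T ∧
    (∃ S ∈ Cset m e, ∀ T' ∈ Lset m e, Frob S ≤ Frob T') ∧
    (∃ S ∈ Cset m e, ∀ T' ∈ Lset m e, genus S ≤ genus T') := by
  have hm2 : 2 ≤ m := le_trans h2 hem
  obtain ⟨hNS, hmu, hed⟩ := hT
  obtain ⟨hsub, hNS', hmu', hed', hpack'⟩ := phi_main_s18 m e hm2 T hNS hmu hed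
  have hphiL : phi T ∈ Lset m e := ⟨hNS', hmu', hed'⟩
  refine ⟨hsub, Frob_le_of_subset hsub hNS.2.2, ?_, ?_, ?_⟩
  · exact Set.ncard_le_ncard (Set.compl_subset_compl.2 hsub) hNS.2.2
  · -- Frobenius minimizer
    have hne : (Frob '' Lset m e).Nonempty := ⟨Frob T, T, ⟨hNS, hmu, hed⟩, rfl⟩
    obtain ⟨T0, hT0, hT0e⟩ := Nat.sInf_mem hne
    obtain ⟨hsub0, hNS0, hmu0, hed0, hpack0⟩ :=
      phi_main_s18 m e hm2 T0 hT0.1 hT0.2.1 hT0.2.2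
    refine ⟨phi T0, ⟨⟨hNS0, hmu0, hed0⟩, hpack0⟩, ?_⟩
    intro T' hT'
    have h1 : Frob (phi T0) ≤ Frob T0 := Frob_le_of_subset hsub0 hT0.1.2.2
    have h2 : Frob T0 ≤ Frob T' := by
      rw [hT0e]
      exact Nat.sInf_le ⟨T', hT', rfl⟩
    omega
  · -- genus minimizer
    have hne : (genus '' Lset m e).Nonempty := ⟨genus T, T, ⟨hNS, hmu, hed⟩, rfl⟩
    obtain ⟨T0, hT0, hT0e⟩ := Nat.sInf_mem hne
    obtain ⟨hsub0, hNS0, hmu0, hed0, hpack0⟩ :=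
      phi_main_s18 m e hm2 T0 hT0.1 hT0.2.1 hT0.2.2
    refine ⟨phi T0, ⟨⟨hNS0, hmu0, hed0⟩, hpack0⟩, ?_⟩
    intro T' hT'
    have h1 : genus (phi T0) ≤ genus T0 :=
      Set.ncard_le_ncard (Set.compl_subset_compl.2 hsub0) hT0.1.2.2
    have h2 : genus T0 ≤ genus T' := by
      rw [hT0e]
      exact Nat.sInf_le ⟨T', hT', rfl⟩
    omega
end
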